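/- arXiv:2602.09700 — 10 statements merged into one kernel-verified Lean document; each statement's English description precedes it below -/
import Mathlib

section
/- Let U and V be the substitutions on the free monoid on {a, b} given by U(a) = ab, U(b) = b and V(a) = a, V(b) = ab, acting componentwise on pairs of words. Let Ū, V̄ be the operators on pairs of words given by Ū(α, β) = (αβ, β) and V̄(α, β) = (α, αβ). Then for any R₁, …, Rₙ ∈ {U, V}, one has (R̄₁ ∘ ⋯ ∘ R̄ₙ)(a, b) = (Rₙ ∘ ⋯ ∘ R₁)(a, b), where R̄ᵢ denotes Ū if Rᵢ = U and V̄ if Rᵢ = V. -/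
/- The letter `a` is encoded by `false` and the letter `b` by `true`. -/

/-- The Nielsen substitution `U : a ↦ ab, b ↦ b`. -/
def Usub (w : List Bool) : List Bool :=
  (w.map (fun c => if c then [true] else [false, true])).flatten

/-- The Nielsen substitution `V : a ↦ a, b ↦ ab`. -/
def Vsub (w : List Bool) : List Bool :=
  (w.map (fun c => if c then [false, true] else [false])).flatten

/-- Exterior renormalization: `Ū(α,β) = (αβ, β)` (when `r = true`) and
`V̄(α,β) = (α, αβ)` (when `r = false`). -/
def outerStep (r : Bool) (p : List Bool × List Bool) : List Bool × List Bool :=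
  if r then (p.1 ++ p.2, p.2) else (p.1, p.1 ++ p.2)

/-- Interior renormalization acting on a pair of words. -/
def innerStep (r : Bool) (p : List Bool × List Bool) : List Bool × List Bool :=
  if r then (Usub p.1, Usub p.2) else (Vsub p.1, Vsub p.2)

lemma Usub_append (u v : List Bool) : Usub (u ++ v) = Usub u ++ Usub v := by
  simp [Usub]

lemma Vsub_append (u v : List Bool) : Vsub (u ++ v) = Vsub u ++ Vsub v := by
  simp [Vsub]

lemma inner_outer_comm (s r : Bool) (p : List Bool × List Bool) :
    innerStep s (outerStep r p) = outerStep r (innerStep s p) := by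
  cases s <;> cases r <;> simp [innerStep, outerStep, Usub_append, Vsub_append]

lemma foldl_outer (r : Bool) (Rs : List Bool) (p : List Bool × List Bool) :
    Rs.foldl (fun p r => innerStep r p) (outerStep r p) =
      outerStep r (Rs.foldl (fun p r => innerStep r p) p) := by
  induction Rs generalizing p with
  | nil => rfl
  | cons s Rs ih => simp [List.foldl_cons, inner_outer_comm, ih]

/-- `(R̄₁ ∘ ⋯ ∘ R̄ₙ)(a, b) = (Rₙ ∘ ⋯ ∘ R₁)(a, b)` for any choices `Rᵢ ∈ {U, V}`. -/
theorem exterior_eq_interior_renormalization (Rs : List Bool) :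
    Rs.foldr outerStep ([false], [true]) =
      Rs.foldl (fun p r => innerStep r p) ([false], [true]) := by
  induction Rs with
  | nil => rfl
  | cons r Rs ih =>
    have base : innerStep r (([false], [true]) : List Bool × List Bool) =
        outerStep r ([false], [true]) := by
      cases r <;> rfl
    rw [List.foldr_cons, ih, List.foldl_cons, base, foldl_outer]
end

section
/- For any finite word w over the alphabet {a, b}, one has b·U(wᵀ) = U(w)ᵀ·b and V(wᵀ)·a = a·V(w)ᵀ, where U, V are the substitutions U(a) = ab, U(b) = b, V(a) = a, V(b) = ab and wᵀ denotes the reversal of w. In particular, if w is a palindrome then b·U(w) and V(w)·a are palindromes. -/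
lemma Usub_comm (w : List Bool) :
    true :: Usub w.reverse = (Usub w).reverse ++ [true] := by
  induction w with
  | nil => rfl
  | cons c t ih =>
    cases c <;> simp [Usub, List.map_append] at ih ⊢ <;>
      rw [← List.cons_append, ih] <;> simp

lemma Vsub_comm (w : List Bool) :
    Vsub w.reverse ++ [false] = false :: (Vsub w).reverse := by
  induction w with
  | nil => rfl
  | cons c t ih =>
    cases c <;> simp [Vsub, List.map_append] at ih ⊢
    · simpa using congrArg (· ++ [false]) ih
    · simpa using congrArg (· ++ [true, false]) ih

/-- `b·U(wᵀ) = U(w)ᵀ·b` and `V(wᵀ)·a = a·V(w)ᵀ`; in particular, if `w` is a palindrome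
then `b·U(w)` and `V(w)·a` are palindromes. -/
theorem commutation_identities (w : List Bool) :
    (true :: Usub w.reverse = (Usub w).reverse ++ [true]) ∧
    (Vsub w.reverse ++ [false] = false :: (Vsub w).reverse) ∧
    (w.reverse = w →
      (true :: Usub w).reverse = true :: Usub w ∧
      (Vsub w ++ [false]).reverse = Vsub w ++ [false]) := by
  refine ⟨Usub_comm w, Vsub_comm w, fun h => ⟨?_, ?_⟩⟩
  · have := Usub_comm w
    rw [h] at this
    simp [this]
  · have := Vsub_comm w
    rw [h] at this
    simp [this]
end

section
/- Every word pair (α, β) obtained from (a, b) by finitely many applications of the operators Ū(α, β) = (αβ, β) and V̄(α, β) = (α, αβ) satisfies: α starts with the letter a and β ends with the letter b, and moreover the identity αβ = β_a α^b holds, where β_a is β with its last letter replaced by a and α^b is α with its first letter replaced by b. -/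
/-- `(α, β)` is obtained from `(a, b)` by finitely many applications of `Ū, V̄`. -/
def ChristoffelPair (p : List Bool × List Bool) : Prop :=
  ∃ Rs : List Bool, Rs.foldr outerStep ([false], [true]) = p

lemma christoffel_aux (Rs : List Bool) :
    ∃ α' β' : List Bool,
      (Rs.foldr outerStep ([false], [true])).1 = false :: α' ∧
      (Rs.foldr outerStep ([false], [true])).2 = β' ++ [true] ∧
      (Rs.foldr outerStep ([false], [true])).1 ++ (Rs.foldr outerStep ([false], [true])).2
        = (β' ++ [false]) ++ (true :: α') := by
  induction Rs with
  | nil => exact ⟨[], [], rfl, rfl, rfl⟩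
  | cons r Rs ih =>
    obtain ⟨α', β', h1, h2, h3⟩ := ih
    cases r with
    | true =>
      refine ⟨α' ++ β' ++ [true], β', ?_, ?_, ?_⟩
      · simp [outerStep, h1, h2]
      · simp [outerStep, h2]
      · simp only [outerStep, List.foldr_cons, reduceIte]
        rw [h3]
        simp [h2]
    | false =>
      refine ⟨α', false :: α' ++ β', ?_, ?_, ?_⟩
      · simp [outerStep, h1]
      · simp [outerStep, h1, h2]
      · simp only [outerStep, List.foldr_cons, reduceIte]
        rw [h3, h1]
        simp

/-- Every Christoffel pair `(α, β)` satisfies: `α` begins with `a`, `β` ends with `b`,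
and `αβ = β_a α^b` where `β_a` replaces the last letter of `β` by `a` and `α^b`
replaces the first letter of `α` by `b`. -/
theorem christoffel_pair_structure (α β : List Bool) (h : ChristoffelPair (α, β)) :
    ∃ α' β' : List Bool, α = false :: α' ∧ β = β' ++ [true] ∧
      α ++ β = (β' ++ [false]) ++ (true :: α') := by
  obtain ⟨Rs, hRs⟩ := h
  obtain ⟨α', β', h1, h2, h3⟩ := christoffel_aux Rs
  rw [hRs] at h1 h2 h3
  exact ⟨α', β', h1, h2, h3⟩
end

section
/- Let (α, β) be any word pair obtained from (a, b) by finitely many applications of Ū(α, β) = (αβ, β) and V̄(α, β) = (α, αβ). Then α^b β = βᵀ α^b and α β_a = β_a αᵀ, where wᵀ is the reversal of w, α^b is α with its first letter changed from a to b, and β_a is β with its last letter changed from b to a. Consequently, for every k ≥ 1 the words α^k β and α β^k start with β_a and end with α^b. -/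
lemma christoffel_inv (Rs : List Bool) :
    ∃ α' β' : List Bool,
      Rs.foldr outerStep ([false], [true]) = (false :: α', β' ++ [true]) ∧
      α' ++ (β' ++ [true]) = β'.reverse ++ (true :: α') ∧
      (false :: α') ++ β' = (β' ++ [false]) ++ α'.reverse := by
  induction Rs with
  | nil => exact ⟨[], [], rfl, rfl, rfl⟩
  | cons r Rs ih =>
    obtain ⟨α', β', hp, hA, hB⟩ := ih
    have hAr : α'.reverse ++ true :: β' = true :: (β'.reverse ++ α'.reverse) := by
      have := congrArg List.reverse hA; simp at this; exact this.symm
    have hBr : β'.reverse ++ (α'.reverse ++ [false]) = α' ++ false :: β'.reverse := by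
      have := congrArg List.reverse hB; simp at this; exact this
    rw [List.foldr_cons, hp]
    cases r
    · -- V̄ : (α, α++β)
      refine ⟨α', false :: (α' ++ β'), ?_, ?_, ?_⟩
      · simp [outerStep]
      · show α' ++ (false :: (α' ++ β') ++ [true]) = (false :: (α' ++ β')).reverse ++ (true :: α')
        simp only [List.reverse_cons, List.reverse_append, List.append_assoc, List.cons_append,
          List.singleton_append, List.nil_append]
        calc α' ++ false :: (α' ++ (β' ++ [true]))
            = α' ++ false :: (β'.reverse ++ true :: α') := by rw [hA]
          _ = (α' ++ false :: β'.reverse) ++ true :: α' := by simp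
          _ = (β'.reverse ++ (α'.reverse ++ [false])) ++ true :: α' := by rw [hBr]
          _ = β'.reverse ++ (α'.reverse ++ false :: true :: α') := by simp
      · show (false :: α') ++ (false :: (α' ++ β')) = ((false :: (α' ++ β')) ++ [false]) ++ α'.reverse
        have hB' : false :: (α' ++ β') = β' ++ ([false] ++ α'.reverse) := by simpa using hB
        simp only [List.cons_append, List.append_assoc]
        rw [hB']
        simp
    · -- Ū : (α++β, β)
      refine ⟨α' ++ (β' ++ [true]), β', ?_, ?_, ?_⟩
      · simp [outerStep]
      · show (α' ++ (β' ++ [true])) ++ (β' ++ [true]) = β'.reverse ++ (true :: (α' ++ (β' ++ [true])))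
        conv_lhs => rw [hA]
        simp
      · show (false :: (α' ++ (β' ++ [true]))) ++ β' = (β' ++ [false]) ++ (α' ++ (β' ++ [true])).reverse
        calc (false :: (α' ++ (β' ++ [true]))) ++ β'
            = ((false :: α') ++ β') ++ (true :: β') := by simp
          _ = ((β' ++ [false]) ++ α'.reverse) ++ (true :: β') := by rw [hB]
          _ = (β' ++ [false]) ++ (α'.reverse ++ true :: β') := by simp
          _ = (β' ++ [false]) ++ (true :: (β'.reverse ++ α'.reverse)) := by rw [hAr]
          _ = (β' ++ [false]) ++ (α' ++ (β' ++ [true])).reverse := by simp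

lemma christoffel_eq1 (α' β' : List Bool)
    (hB : (false :: α') ++ β' = (β' ++ [false]) ++ α'.reverse) :
    ∀ j : ℕ, ∃ t : List Bool,
      (List.replicate (j+1) (false :: α')).flatten ++ β' = (β' ++ [false]) ++ t := by
  have hI2 : (false :: α') ++ (β' ++ [false]) = (β' ++ [false]) ++ (false :: α').reverse := by
    simp only [List.reverse_cons]
    calc (false :: α') ++ (β' ++ [false]) = ((false :: α') ++ β') ++ [false] := by simp
      _ = ((β' ++ [false]) ++ α'.reverse) ++ [false] := by rw [hB]
      _ = (β' ++ [false]) ++ (α'.reverse ++ [false]) := by simp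
  intro j
  induction j with
  | zero => exact ⟨α'.reverse, by simpa using hB⟩
  | succ j ih =>
    obtain ⟨t, ht⟩ := ih
    refine ⟨(false :: α').reverse ++ t, ?_⟩
    calc (List.replicate (j+2) (false :: α')).flatten ++ β'
        = (false :: α') ++ ((List.replicate (j+1) (false :: α')).flatten ++ β') := by
          simp [List.replicate_succ (n := j+1)]
      _ = (false :: α') ++ ((β' ++ [false]) ++ t) := by rw [ht]
      _ = ((false :: α') ++ (β' ++ [false])) ++ t := by simp
      _ = ((β' ++ [false]) ++ (false :: α').reverse) ++ t := by rw [hI2]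
      _ = (β' ++ [false]) ++ ((false :: α').reverse ++ t) := by simp

lemma christoffel_eq2 (α' β' : List Bool)
    (hA : α' ++ (β' ++ [true]) = β'.reverse ++ (true :: α')) :
    ∀ j : ℕ, ∃ t : List Bool,
      α' ++ (List.replicate (j+1) (β' ++ [true])).flatten = t ++ (true :: α') := by
  intro j
  induction j with
  | zero => exact ⟨β'.reverse, by simpa using hA⟩
  | succ j ih =>
    obtain ⟨t, ht⟩ := ih
    refine ⟨β'.reverse ++ [true] ++ t, ?_⟩
    calc α' ++ (List.replicate (j+2) (β' ++ [true])).flatten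
        = (α' ++ (β' ++ [true])) ++ (List.replicate (j+1) (β' ++ [true])).flatten := by
          simp [List.replicate_succ (n := j+1)]
      _ = (β'.reverse ++ (true :: α')) ++ (List.replicate (j+1) (β' ++ [true])).flatten := by
          rw [hA]
      _ = β'.reverse ++ [true] ++ (α' ++ (List.replicate (j+1) (β' ++ [true])).flatten) := by
          simp
      _ = β'.reverse ++ [true] ++ (t ++ (true :: α')) := by rw [ht]
      _ = (β'.reverse ++ [true] ++ t) ++ (true :: α') := by simp

/-- For every Christoffel pair `(α, β)` (with `α = a·α'`, `β = β'·b`):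
`α^b β = βᵀ α^b`, `α β_a = β_a αᵀ`, and for every `k ≥ 1` the words `α^k β` and
`α β^k` start with `β_a` and end with `α^b`. -/
theorem christoffel_symmetry (α β : List Bool) (h : ChristoffelPair (α, β)) :
    ∃ α' β' : List Bool, α = false :: α' ∧ β = β' ++ [true] ∧
      ((true :: α') ++ β = β.reverse ++ (true :: α')) ∧
      (α ++ (β' ++ [false]) = (β' ++ [false]) ++ α.reverse) ∧
      (∀ k : ℕ, 1 ≤ k →
        ((β' ++ [false]) <+: ((List.replicate k α).flatten ++ β) ∧
          (true :: α') <:+ ((List.replicate k α).flatten ++ β)) ∧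
        ((β' ++ [false]) <+: (α ++ (List.replicate k β).flatten) ∧
          (true :: α') <:+ (α ++ (List.replicate k β).flatten))) := by
  obtain ⟨Rs, hRs⟩ := h
  obtain ⟨α', β', hp, hA, hB⟩ := christoffel_inv Rs
  rw [hRs] at hp
  obtain ⟨hα, hβ⟩ : α = false :: α' ∧ β = β' ++ [true] := by
    constructor <;> [exact congrArg Prod.fst hp; exact congrArg Prod.snd hp]
  subst hα; subst hβ
  refine ⟨α', β', rfl, rfl, ?_, ?_, ?_⟩
  · -- I1
    calc (true :: α') ++ (β' ++ [true]) = true :: (α' ++ (β' ++ [true])) := by simp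
      _ = true :: (β'.reverse ++ (true :: α')) := by rw [hA]
      _ = (β' ++ [true]).reverse ++ (true :: α') := by simp
  · -- I2
    calc (false :: α') ++ (β' ++ [false]) = ((false :: α') ++ β') ++ [false] := by simp
      _ = ((β' ++ [false]) ++ α'.reverse) ++ [false] := by rw [hB]
      _ = (β' ++ [false]) ++ (false :: α').reverse := by simp
  · intro k hk
    obtain ⟨j, rfl⟩ : ∃ j, k = j + 1 := ⟨k - 1, by omega⟩
    refine ⟨⟨?_, ?_⟩, ?_, ?_⟩
    · -- β_a prefix of α^k β
      obtain ⟨t, ht⟩ := christoffel_eq1 α' β' hB j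
      refine ⟨t ++ [true], ?_⟩
      calc (β' ++ [false]) ++ (t ++ [true])
          = ((β' ++ [false]) ++ t) ++ [true] := by simp
        _ = ((List.replicate (j+1) (false :: α')).flatten ++ β') ++ [true] := by rw [ht]
        _ = (List.replicate (j+1) (false :: α')).flatten ++ (β' ++ [true]) := by simp
    · -- α^b suffix of α^k β
      refine ⟨(List.replicate j (false :: α')).flatten ++ false :: β'.reverse, ?_⟩
      calc ((List.replicate j (false :: α')).flatten ++ false :: β'.reverse) ++ (true :: α')
          = (List.replicate j (false :: α')).flatten ++
              (false :: (β'.reverse ++ (true :: α'))) := by simp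
        _ = (List.replicate j (false :: α')).flatten ++
              (false :: (α' ++ (β' ++ [true]))) := by rw [hA]
        _ = (List.replicate (j+1) (false :: α')).flatten ++ (β' ++ [true]) := by
            simp [List.replicate_succ' (n := j)]
    · -- β_a prefix of α β^k
      obtain ⟨t, ht⟩ := christoffel_eq1 α' β' hB 0
      refine ⟨t ++ true :: (List.replicate j (β' ++ [true])).flatten, ?_⟩
      have ht' : (false :: α') ++ β' = (β' ++ [false]) ++ t := by simpa using ht
      calc (β' ++ [false]) ++ (t ++ true :: (List.replicate j (β' ++ [true])).flatten)
          = ((β' ++ [false]) ++ t) ++ true :: (List.replicate j (β' ++ [true])).flatten := by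
            simp
        _ = ((false :: α') ++ β') ++ true :: (List.replicate j (β' ++ [true])).flatten := by
            rw [ht']
        _ = (false :: α') ++ (List.replicate (j+1) (β' ++ [true])).flatten := by
            simp [List.replicate_succ (n := j)]
    · -- α^b suffix of α β^k
      obtain ⟨t, ht⟩ := christoffel_eq2 α' β' hA j
      refine ⟨false :: t, ?_⟩
      calc (false :: t) ++ (true :: α')
          = false :: (t ++ (true :: α')) := by simp
        _ = false :: (α' ++ (List.replicate (j+1) (β' ++ [true])).flatten) := by rw [ht]
        _ = (false :: α') ++ (List.replicate (j+1) (β' ++ [true])).flatten := by simp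
end

section
/- Let (α, β) be a word pair obtained from (a, b) by finitely many applications of Ū and V̄. Then the right-infinite word α^∞ = ααα… equals β_a·(αᵀ)^∞, and the left-infinite word β^∞ = …βββ equals (βᵀ)^∞·α^b, where β_a replaces the last letter of β by a and α^b replaces the first letter of α by b. -/
namespace ChrisAux

def Inv' (α' β' : List Bool) : Prop :=
  α'.reverse ++ [true] = true :: α' ∧
  false :: β'.reverse = β' ++ [false] ∧
  β'.reverse ++ α'.reverse = α' ++ β'

lemma step_U {α' β' : List Bool} (h : Inv' α' β') :
    Inv' (α' ++ (β' ++ [true])) β' := by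
  obtain ⟨h1, h2, hw⟩ := h
  refine ⟨?_, h2, ?_⟩
  · calc (α' ++ (β' ++ [true])).reverse ++ [true]
        = (true :: (β'.reverse ++ α'.reverse)) ++ [true] := by simp
      _ = (true :: (α' ++ β')) ++ [true] := by rw [hw]
      _ = true :: (α' ++ (β' ++ [true])) := by simp
  · calc β'.reverse ++ (α' ++ (β' ++ [true])).reverse
        = β'.reverse ++ (true :: (β'.reverse ++ α'.reverse)) := by simp
      _ = β'.reverse ++ (true :: (α' ++ β')) := by rw [hw]
      _ = (β'.reverse ++ (true :: α')) ++ β' := by simp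
      _ = (β'.reverse ++ (α'.reverse ++ [true])) ++ β' := by rw [h1]
      _ = ((β'.reverse ++ α'.reverse) ++ [true]) ++ β' := by simp
      _ = ((α' ++ β') ++ [true]) ++ β' := by rw [hw]
      _ = (α' ++ (β' ++ [true])) ++ β' := by simp

lemma step_V {α' β' : List Bool} (h : Inv' α' β') :
    Inv' α' (false :: (α' ++ β')) := by
  obtain ⟨h1, h2, hw⟩ := h
  refine ⟨h1, ?_, ?_⟩
  · calc false :: (false :: (α' ++ β')).reverse
        = false :: ((β'.reverse ++ α'.reverse) ++ [false]) := by simp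
      _ = false :: ((α' ++ β') ++ [false]) := by rw [hw]
      _ = (false :: (α' ++ β')) ++ [false] := by simp
  · calc (false :: (α' ++ β')).reverse ++ α'.reverse
        = ((β'.reverse ++ α'.reverse) ++ [false]) ++ α'.reverse := by simp
      _ = ((α' ++ β') ++ [false]) ++ α'.reverse := by rw [hw]
      _ = α' ++ ((β' ++ [false]) ++ α'.reverse) := by simp
      _ = α' ++ ((false :: β'.reverse) ++ α'.reverse) := by rw [h2]
      _ = α' ++ (false :: (β'.reverse ++ α'.reverse)) := by simp
      _ = α' ++ (false :: (α' ++ β')) := by rw [hw]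

lemma pair_inv (Rs : List Bool) :
    ∃ α' β' : List Bool,
      (Rs.foldr outerStep ([false], [true])).1 = false :: α' ∧
      (Rs.foldr outerStep ([false], [true])).2 = β' ++ [true] ∧
      Inv' α' β' := by
  induction Rs with
  | nil => exact ⟨[], [], rfl, rfl, rfl, rfl, rfl⟩
  | cons r Rs ih =>
    obtain ⟨α', β', h1, h2, hinv⟩ := ih
    rw [List.foldr_cons]
    cases r with
    | true =>
      refine ⟨α' ++ (β' ++ [true]), β', ?_, ?_, step_U hinv⟩
      · simp [outerStep, h1, h2]
      · simp [outerStep, h2]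
    | false =>
      refine ⟨α', false :: (α' ++ β'), ?_, ?_, step_V hinv⟩
      · simp [outerStep, h1]
      · simp [outerStep, h1, h2]

lemma selfPrefix (γ w : List Bool) (hγ : 0 < γ.length)
    (hpre : ∀ i, i < w.length → w.getD i false = (γ ++ w).getD i false) :
    ∀ n, n < w.length → w.getD n false = γ.getD (n % γ.length) false := by
  intro n
  induction n using Nat.strong_induction_on with
  | _ n ih =>
    intro hn
    rcases lt_or_ge n γ.length with hlt | hge
    · rw [hpre n hn, List.getD_append _ _ _ _ hlt, Nat.mod_eq_of_lt hlt]
    · rw [hpre n hn, List.getD_append_right _ _ _ _ hge]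
      have hlt' : n - γ.length < n := by omega
      rw [ih _ hlt' (by omega)]
      congr 1
      conv_rhs => rw [← Nat.sub_add_cancel hge]
      rw [Nat.add_mod_right]

end ChrisAux

/-- For a Christoffel pair `(α, β)` (with `α = a·α'`, `β = β'·b`), the right-infinite
word `α^∞` equals `β_a·(αᵀ)^∞`, and the left-infinite word `β^∞ = …βββ` equals
`(βᵀ)^∞·α^b`. -/
theorem christoffel_infinite_identities (α β : List Bool) (h : ChristoffelPair (α, β)) :
    ∃ α' β' : List Bool, α = false :: α' ∧ β = β' ++ [true] ∧
      (∀ n : ℕ, α.getD (n % α.length) false =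
        if n < β.length then (β' ++ [false]).getD n false
        else α.reverse.getD ((n - β.length) % α.length) false) ∧
      (∀ n : ℕ, β.reverse.getD (n % β.length) false =
        if n < α.length then (true :: α').reverse.getD n false
        else β.getD ((n - α.length) % β.length) false) := by
  obtain ⟨Rs, hRs⟩ := h
  obtain ⟨α', β', hα, hβ, h1, h2, hw⟩ := ChrisAux.pair_inv Rs
  rw [hRs] at hα hβ
  simp only at hα hβ
  subst hα hβ
  -- the fundamental finite identity αβ = β_a · α^b and its reverse
  have hI : (false :: α') ++ (β' ++ [true]) = (β' ++ [false]) ++ (true :: α') := by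
    calc (false :: α') ++ (β' ++ [true])
        = false :: ((α' ++ β') ++ [true]) := by simp
      _ = false :: ((β'.reverse ++ α'.reverse) ++ [true]) := by rw [hw]
      _ = false :: (β'.reverse ++ (α'.reverse ++ [true])) := by simp
      _ = false :: (β'.reverse ++ (true :: α')) := by rw [h1]
      _ = (false :: β'.reverse) ++ (true :: α') := by simp
      _ = (β' ++ [false]) ++ (true :: α') := by rw [h2]
  have hIr : (β' ++ [true]).reverse ++ (false :: α').reverse
      = (true :: α') ++ (β' ++ [false]) := by
    calc (β' ++ [true]).reverse ++ (false :: α').reverse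
        = true :: ((β'.reverse ++ α'.reverse) ++ [false]) := by simp
      _ = true :: ((α' ++ β') ++ [false]) := by rw [hw]
      _ = (true :: α') ++ (β' ++ [false]) := by simp
  -- β_a is a prefix of α^∞
  have P1 : ∀ n < (β' ++ [false]).length,
      (β' ++ [false]).getD n false
        = (false :: α').getD (n % (false :: α').length) false := by
    apply ChrisAux.selfPrefix _ _ (by simp)
    intro i hi
    have hi' : i < β'.length + 1 := by
      simp only [List.length_append, List.length_cons, List.length_nil] at hi; omega
    have key : ((false :: α') ++ (β' ++ [false])).getD i false
        = (β' ++ [false]).getD i false := by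
      rw [show (false :: α') ++ (β' ++ [false]) = ((false :: α') ++ β') ++ [false] by simp,
          List.getD_append _ _ _ _ (by
            simp only [List.length_append, List.length_cons]; omega),
          ← List.getD_append ((false :: α') ++ β') [true] false i (by
            simp only [List.length_append, List.length_cons]; omega),
          show ((false :: α') ++ β') ++ [true] = (β' ++ [false]) ++ (true :: α') by
            rw [← hI]; simp,
          List.getD_append _ _ _ _ (by
            simp only [List.length_append, List.length_cons, List.length_nil]; omega)]
    exact key.symm
  -- rotation identity for α
  have R1 : ∀ m < α'.length + 1,
      (false :: α').reverse.getD m false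
        = (false :: α').getD ((β'.length + 1 + m) % (α'.length + 1)) false := by
    intro m hm
    have key : ((true :: α') ++ (β' ++ [false])).getD (β'.length + 1 + m) false
        = (false :: α').reverse.getD m false := by
      rw [← hIr, List.getD_append_right _ _ _ _ (by
        simp only [List.length_reverse, List.length_append, List.length_cons,
          List.length_nil]; omega)]
      congr 1
      simp only [List.length_reverse, List.length_append, List.length_cons,
        List.length_nil]
      omega
    rw [← key]
    rcases lt_or_ge (β'.length + 1 + m) (α'.length + 1) with hlt | hge
    · rw [Nat.mod_eq_of_lt hlt,
          List.getD_append _ _ _ _ (by simp only [List.length_cons]; omega)]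
      obtain ⟨k, hk⟩ : ∃ k, β'.length + 1 + m = k + 1 := ⟨β'.length + m, by omega⟩
      rw [hk, List.getD_cons_succ, List.getD_cons_succ]
    · rw [List.getD_append_right _ _ _ _ (by simp only [List.length_cons]; omega)]
      simp only [List.length_cons]
      have h5 := P1 (β'.length + 1 + m - (α'.length + 1)) (by
        simp only [List.length_append, List.length_cons, List.length_nil]; omega)
      rw [h5]
      congr 1
      simp only [List.length_cons]
      conv_rhs => rw [show β'.length + 1 + m
        = (β'.length + 1 + m - (α'.length + 1)) + (α'.length + 1) by omega]
      rw [Nat.add_mod_right]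
  -- α^b is a prefix of (βᵀ)^∞
  have P2 : ∀ n < (true :: α').length,
      (true :: α').getD n false
        = (β' ++ [true]).reverse.getD (n % (β' ++ [true]).reverse.length) false := by
    apply ChrisAux.selfPrefix _ _ (by simp)
    intro i hi
    have hi' : i < α'.length + 1 := by simp only [List.length_cons] at hi; omega
    have key : ((β' ++ [true]).reverse ++ (true :: α')).getD i false
        = (true :: α').getD i false := by
      rw [show (β' ++ [true]).reverse ++ (true :: α')
            = ((β' ++ [true]).reverse ++ α'.reverse) ++ [true] by rw [← h1]; simp,
          List.getD_append _ _ _ _ (by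
            simp only [List.length_append, List.length_reverse, List.length_cons,
              List.length_nil]; omega),
          ← List.getD_append ((β' ++ [true]).reverse ++ α'.reverse) [false] false i (by
            simp only [List.length_append, List.length_reverse, List.length_cons,
              List.length_nil]; omega),
          show ((β' ++ [true]).reverse ++ α'.reverse) ++ [false]
            = (true :: α') ++ (β' ++ [false]) by rw [← hIr]; simp,
          List.getD_append _ _ _ _ (by simp only [List.length_cons]; omega)]
    exact key.symm
  -- rotation identity for β
  have R2 : ∀ m < β'.length + 1,
      (β' ++ [true]).getD m false
        = (β' ++ [true]).reverse.getD ((α'.length + 1 + m) % (β'.length + 1)) false := by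
    intro m hm
    have key : ((β' ++ [false]) ++ (true :: α')).getD (α'.length + 1 + m) false
        = (β' ++ [true]).getD m false := by
      rw [← hI, List.getD_append_right _ _ _ _ (by simp only [List.length_cons]; omega)]
      congr 1
      simp only [List.length_cons]
      omega
    rw [← key]
    rcases lt_or_ge (α'.length + 1 + m) (β'.length + 1) with hlt | hge
    · rw [Nat.mod_eq_of_lt hlt,
          List.getD_append _ _ _ _ (by
            simp only [List.length_append, List.length_cons, List.length_nil]; omega),
          show β' ++ [false] = false :: β'.reverse from h2.symm]
      obtain ⟨k, hk⟩ : ∃ k, α'.length + 1 + m = k + 1 := ⟨α'.length + m, by omega⟩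
      rw [hk, List.getD_cons_succ,
          show (β' ++ [true]).reverse = true :: β'.reverse by simp,
          List.getD_cons_succ]
    · rw [List.getD_append_right _ _ _ _ (by
        simp only [List.length_append, List.length_cons, List.length_nil]; omega)]
      simp only [List.length_append, List.length_cons, List.length_nil]
      have h5 := P2 (α'.length + 1 + m - (β'.length + 0 + 1)) (by
        simp only [List.length_cons]; omega)
      rw [h5]
      congr 1
      simp only [List.length_reverse, List.length_append, List.length_cons,
        List.length_nil]
      conv_rhs => rw [show α'.length + 1 + m
        = (α'.length + 1 + m - (β'.length + 0 + 1)) + (β'.length + 0 + 1) by omega]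
      rw [Nat.add_mod_right]
  refine ⟨α', β', rfl, rfl, ?_, ?_⟩
  · intro n
    split_ifs with hn
    · exact (P1 n (by
        simp only [List.length_append, List.length_cons, List.length_nil] at hn ⊢
        omega)).symm
    · have hn' : β'.length + 1 ≤ n := by
        simp only [List.length_append, List.length_cons, List.length_nil] at hn; omega
      have hAl : (false :: α').length = α'.length + 1 := by simp
      have hBl : (β' ++ [true]).length = β'.length + 1 := by simp
      rw [hAl, hBl]
      have hR := R1 ((n - (β'.length + 1)) % (α'.length + 1)) (Nat.mod_lt _ (by omega))
      rw [hR, Nat.add_mod_mod, show β'.length + 1 + (n - (β'.length + 1)) = n by omega]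
  · intro n
    split_ifs with hn
    · rw [show (true :: α').reverse = true :: α' by simpa using h1,
          P2 n (by simp only [List.length_cons] at hn ⊢; omega)]
      simp only [List.length_reverse]
    · have hn' : α'.length + 1 ≤ n := by simp only [List.length_cons] at hn; omega
      have hAl : (false :: α').length = α'.length + 1 := by simp
      have hBl : (β' ++ [true]).length = β'.length + 1 := by simp
      rw [hAl, hBl]
      have hR := R2 ((n - (α'.length + 1)) % (β'.length + 1)) (Nat.mod_lt _ (by omega))
      rw [hR, Nat.add_mod_mod, show α'.length + 1 + (n - (α'.length + 1)) = n by omega]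
end

section
/- Every word pair (α, β) obtained from (a, b) by finitely many applications of Ū(α, β) = (αβ, β) and V̄(α, β) = (α, αβ) satisfies: αβ = aθb for some palindrome θ over {a, b}, and moreover ααββ = aθ'abθ'b for some palindrome θ'. -/
/-- The inductive invariant on `p = α.tail`, `q = β.dropLast`. -/
def ChrInv (p q : List Bool) : Prop :=
  [false] ++ p ++ q ++ [true] = q ++ [false, true] ++ p ∧
  (p ++ q).reverse = p ++ q ∧
  q.reverse ++ [true] ++ p = p ++ q ++ [true] ∧
  q ++ [false] ++ p.reverse = [false] ++ p ++ q

lemma chr_key (Rs : List Bool) :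
    ∃ p q : List Bool,
      Rs.foldr outerStep ([false], [true]) = ([false] ++ p, q ++ [true]) ∧ ChrInv p q := by
  induction Rs with
  | nil => exact ⟨[], [], rfl, by simp [ChrInv]⟩
  | cons r Rs ih =>
    obtain ⟨p, q, hfold, h1, h2, h3, h4⟩ := ih
    simp only [List.foldr_cons, hfold]
    cases r with
    | true =>
      -- Ū : (α ++ β, β), new p' = p ++ q ++ [true], q' = q
      refine ⟨p ++ q ++ [true], q, by simp [outerStep], ?_, ?_, ?_, ?_⟩
      · -- a p' q' b = q' a b p'
        calc [false] ++ (p ++ q ++ [true]) ++ q ++ [true]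
            = ([false] ++ p ++ q ++ [true]) ++ (q ++ [true]) := by simp
          _ = (q ++ [false, true] ++ p) ++ (q ++ [true]) := by rw [h1]
          _ = q ++ [false, true] ++ (p ++ q ++ [true]) := by simp
      · -- (p' ++ q') palindrome
        calc ((p ++ q ++ [true]) ++ q).reverse
            = q.reverse ++ [true] ++ (p ++ q).reverse := by simp
          _ = q.reverse ++ [true] ++ (p ++ q) := by rw [h2]
          _ = (q.reverse ++ [true] ++ p) ++ q := by simp
          _ = (p ++ q ++ [true]) ++ q := by rw [h3]
      · -- q'.rev ++ b ++ p' = p' ++ q' ++ b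
        calc q.reverse ++ [true] ++ (p ++ q ++ [true])
            = (q.reverse ++ [true] ++ p) ++ (q ++ [true]) := by simp
          _ = (p ++ q ++ [true]) ++ (q ++ [true]) := by rw [h3]
          _ = p ++ q ++ [true] ++ q ++ [true] := by simp
      · -- q' ++ a ++ p'.rev = a ++ p' ++ q'
        calc q ++ [false] ++ (p ++ q ++ [true]).reverse
            = q ++ [false] ++ ([true] ++ (p ++ q).reverse) := by simp
          _ = q ++ [false] ++ ([true] ++ (p ++ q)) := by rw [h2]
          _ = (q ++ [false, true] ++ p) ++ q := by simp
          _ = ([false] ++ p ++ q ++ [true]) ++ q := by rw [h1]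
          _ = [false] ++ (p ++ q ++ [true]) ++ q := by simp
    | false =>
      -- V̄ : (α, α ++ β), new p' = p, q' = [false] ++ p ++ q
      refine ⟨p, [false] ++ p ++ q, by simp [outerStep], ?_, ?_, ?_, ?_⟩
      · calc [false] ++ p ++ ([false] ++ p ++ q) ++ [true]
            = [false] ++ p ++ ([false] ++ p ++ q ++ [true]) := by simp
          _ = [false] ++ p ++ (q ++ [false, true] ++ p) := by rw [h1]
          _ = ([false] ++ p ++ q) ++ [false, true] ++ p := by simp
      · calc (p ++ ([false] ++ p ++ q)).reverse
            = (p ++ q).reverse ++ [false] ++ p.reverse := by simp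
          _ = (p ++ q) ++ [false] ++ p.reverse := by rw [h2]
          _ = p ++ (q ++ [false] ++ p.reverse) := by simp
          _ = p ++ ([false] ++ p ++ q) := by rw [h4]
      · calc ([false] ++ p ++ q).reverse ++ [true] ++ p
            = (p ++ q).reverse ++ [false] ++ [true] ++ p := by simp
          _ = (p ++ q) ++ [false] ++ [true] ++ p := by rw [h2]
          _ = p ++ (q ++ [false, true] ++ p) := by simp
          _ = p ++ ([false] ++ p ++ q ++ [true]) := by rw [h1]
          _ = p ++ ([false] ++ p ++ q) ++ [true] := by simp
      · calc ([false] ++ p ++ q) ++ [false] ++ p.reverse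
            = [false] ++ p ++ (q ++ [false] ++ p.reverse) := by simp
          _ = [false] ++ p ++ ([false] ++ p ++ q) := by rw [h4]
          _ = [false] ++ p ++ ([false] ++ p ++ q) := by simp

/-- For every Christoffel pair `(α, β)`: `αβ = aθb` with `θ` a palindrome, and
`ααββ = aθ'abθ'b` with `θ'` a palindrome. -/
theorem christoffel_palindromes (α β : List Bool) (h : ChristoffelPair (α, β)) :
    (∃ θ : List Bool, θ.reverse = θ ∧ α ++ β = [false] ++ θ ++ [true]) ∧
    (∃ θ' : List Bool, θ'.reverse = θ' ∧
      α ++ α ++ β ++ β = [false] ++ θ' ++ [false, true] ++ θ' ++ [true]) := by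
  obtain ⟨Rs, hRs⟩ := h
  obtain ⟨p, q, hfold, h1, h2, h3, h4⟩ := chr_key Rs
  rw [hRs] at hfold
  obtain ⟨hα, hβ⟩ : α = [false] ++ p ∧ β = q ++ [true] := by
    constructor <;> [exact congrArg Prod.fst hfold; exact congrArg Prod.snd hfold]
  subst hα hβ
  constructor
  · exact ⟨p ++ q, h2, by simp⟩
  · refine ⟨p ++ q, h2, ?_⟩
    calc [false] ++ p ++ ([false] ++ p) ++ (q ++ [true]) ++ (q ++ [true])
        = [false] ++ p ++ ([false] ++ p ++ q ++ [true]) ++ (q ++ [true]) := by simp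
      _ = [false] ++ p ++ (q ++ [false, true] ++ p) ++ (q ++ [true]) := by rw [h1]
      _ = [false] ++ (p ++ q) ++ [false, true] ++ (p ++ q) ++ [true] := by simp
end

section
/- Let E and F be right-infinite words over the alphabet {a, b}, where a codes the block 22 and b codes the block 11 of partial quotients. Then [2; 2, E] + [0; 1, 1, F] ≤ 3 if and only if E ⪯ F in lexicographic order (with a < b on blocks interpreted via 2 > 1 entrywise), and [2; 2, E] + [0; 1, 1, F] ≥ 3 if and only if F ⪯ E. Here [c₀; c₁, c₂, …] denotes the value of the infinite continued fraction with the partial quotients obtained by expanding each letter a ↦ 2,2 and b ↦ 1,1. -/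
/- The letter `a` is encoded by `false` and the letter `b` by `true`; the substitution
`χ` sends `a ↦ 2,2` and `b ↦ 1,1`. -/

/-- Value of a finite continued fraction `[a₀; a₁, …, aₙ]` with real entries. -/
noncomputable def cfListVal : List ℝ → ℝ
  | [] => 0
  | [x] => x
  | x :: y :: t => x + 1 / cfListVal (y :: t)

/-- Value of the infinite continued fraction `[s 0; s 1, s 2, …]`,
as the limit of the finite convergents. -/
noncomputable def cfVal (s : ℕ → ℝ) : ℝ :=
  Filter.limUnder Filter.atTop (fun n => cfListVal (((List.range (n + 1)).map s)))

/-- The sequence of partial quotients obtained from a right-infinite word over `{a, b}`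
by the substitution `a ↦ 2,2`, `b ↦ 1,1`. -/
def chiSeq (E : ℕ → Bool) : ℕ → ℝ := fun n => if E (n / 2) then 1 else 2

/-- `[2; 2, E]`. -/
noncomputable def valTwo (E : ℕ → Bool) : ℝ :=
  cfVal (fun n => if n < 2 then 2 else chiSeq E (n - 2))

/-- `[0; 1, 1, F]`. -/
noncomputable def valZero (F : ℕ → Bool) : ℝ :=
  cfVal (fun n => if n = 0 then 0 else if n < 3 then 1 else chiSeq F (n - 3))

/-- The lexicographic order on right-infinite words over `{a, b}` determined by the
convention that a larger value of `[2; 2, ·]` corresponds to a lexicographically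
smaller word (so at the first difference the smaller word carries the letter `b`). -/
def lexLe (E F : ℕ → Bool) : Prop :=
  E = F ∨ ∃ n : ℕ, (∀ m, m < n → E m = F m) ∧ E n = true ∧ F n = false

open Filter

noncomputable def conv (s : ℕ → ℝ) (n : ℕ) : ℝ := cfListVal ((List.range (n+1)).map s)

def Ok (s : ℕ → ℝ) : Prop := ∀ n, 1 ≤ s n ∧ s n ≤ 2

lemma cfListVal_cons (x : ℝ) (l : List ℝ) (h : l ≠ []) :
    cfListVal (x :: l) = x + 1 / cfListVal l := by
  cases l with
  | nil => exact absurd rfl h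
  | cons y t => rfl

lemma range_map_succ (s : ℕ → ℝ) (n : ℕ) :
    (List.range (n+1+1)).map s = s 0 :: (List.range (n+1)).map (fun i => s (i+1)) := by
  rw [List.range_succ_eq_map]
  simp [List.map_map, Function.comp_def, Nat.succ_eq_add_one]

lemma conv_zero (s : ℕ → ℝ) : conv s 0 = s 0 := by
  simp [conv, List.range_succ, cfListVal]

lemma conv_succ (s : ℕ → ℝ) (n : ℕ) :
    conv s (n+1) = s 0 + 1 / conv (fun i => s (i+1)) n := by
  rw [conv, range_map_succ, cfListVal_cons]
  · rfl
  · simp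

lemma ok_shift {s : ℕ → ℝ} (hs : Ok s) : Ok (fun i => s (i+1)) := fun n => hs (n+1)

lemma conv_bounds {s : ℕ → ℝ} (hs : Ok s) : ∀ n, 1 ≤ conv s n ∧ conv s n ≤ 3 := by
  intro n
  induction n generalizing s with
  | zero => rw [conv_zero]; exact ⟨(hs 0).1, by linarith [(hs 0).2]⟩
  | succ m ih =>
    rw [conv_succ]
    obtain ⟨h1, h3⟩ := ih (ok_shift hs)
    have h0 : (0:ℝ) < conv (fun i => s (i+1)) m := by linarith
    have hd1 : 1 / conv (fun i => s (i+1)) m ≤ 1 := by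
      rw [div_le_one h0]; linarith
    have hd2 : (1:ℝ)/3 ≤ 1 / conv (fun i => s (i+1)) m := by
      apply one_div_le_one_div_of_le <;> linarith
    constructor
    · linarith [(hs 0).1]
    · linarith [(hs 0).2]

lemma conv_succ_bounds {s : ℕ → ℝ} (hs : Ok s) (n : ℕ) :
    s 0 + 1/3 ≤ conv s (n+1) ∧ conv s (n+1) ≤ s 0 + 1 := by
  rw [conv_succ]
  obtain ⟨h1, h3⟩ := conv_bounds (ok_shift hs) n
  have h0 : (0:ℝ) < conv (fun i => s (i+1)) n := by linarith
  have hd1 : 1 / conv (fun i => s (i+1)) n ≤ 1 := by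
    rw [div_le_one h0]; linarith
  have hd2 : (1:ℝ)/3 ≤ 1 / conv (fun i => s (i+1)) n := by
    apply one_div_le_one_div_of_le <;> linarith
  constructor <;> linarith

lemma diff_bound : ∀ (n : ℕ) (s : ℕ → ℝ), Ok s →
    |conv s (n+1) - conv s n| ≤ 4 * (3/4)^n := by
  intro n
  induction n using Nat.strong_induction_on with
  | _ n ih =>
    intro s hs
    match n with
    | 0 =>
      obtain ⟨a1, a3⟩ := conv_bounds hs 1
      obtain ⟨b1, b3⟩ := conv_bounds hs 0
      rw [abs_le]; norm_num; constructor <;> linarith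
    | 1 =>
      obtain ⟨a1, a3⟩ := conv_bounds hs 2
      obtain ⟨b1, b3⟩ := conv_bounds hs 1
      rw [abs_le]; norm_num; constructor <;> linarith
    | (m+2) =>
      have hs' := ok_shift hs
      have hx := conv_succ_bounds hs' (m+1)
      have hy := conv_succ_bounds hs' m
      have hs'01 := (hs' 0).1
      set x := conv (fun i => s (i+1)) (m+2) with hxd
      set y := conv (fun i => s (i+1)) (m+1) with hyd
      have hx43 : (4:ℝ)/3 ≤ x := by linarith [hx.1]
      have hy43 : (4:ℝ)/3 ≤ y := by linarith [hy.1]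
      have hx0 : (0:ℝ) < x := by linarith
      have hy0 : (0:ℝ) < y := by linarith
      have key : conv s (m+3) - conv s (m+2) = (y - x) / (x * y) := by
        rw [conv_succ s (m+2), conv_succ s (m+1)]
        rw [← hxd, ← hyd]
        field_simp
        ring
      rw [key, abs_div, abs_of_pos (by positivity : (0:ℝ) < x * y)]
      have ihm : |y - x| ≤ 4 * (3/4)^(m+1) := by
        have := ih (m+1) (by omega) (fun i => s (i+1)) hs'
        rwa [abs_sub_comm] at this
      have hxy : (16:ℝ)/9 ≤ x * y := by nlinarith
      calc |y - x| / (x * y) ≤ (4 * (3/4)^(m+1)) / (16/9) := by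
            apply div_le_div₀ (by positivity) ihm (by norm_num) hxy
        _ ≤ 4 * (3/4)^(m+2) := by
            rw [div_le_iff₀ (by norm_num : (0:ℝ) < 16/9)]
            have hp : (0:ℝ) < (3/4:ℝ)^(m+1) := by positivity
            have h2 : ((3:ℝ)/4)^(m+2) = (3/4)^(m+1) * (3/4) := pow_succ _ _
            rw [h2]
            nlinarith

lemma tendsto_conv {s : ℕ → ℝ} (hs : Ok s) :
    Tendsto (conv s) atTop (nhds (cfVal s)) := by
  have hc : CauchySeq (conv s) := by
    apply cauchySeq_of_le_geometric (3/4) 4 (by norm_num)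
    intro n
    rw [Real.dist_eq, abs_sub_comm]
    exact diff_bound n s hs
  obtain ⟨x, hx⟩ := cauchySeq_tendsto_of_complete hc
  have : cfVal s = x := hx.limUnder_eq
  rwa [this]

lemma cfVal_bounds {s : ℕ → ℝ} (hs : Ok s) : 1 ≤ cfVal s ∧ cfVal s ≤ 3 :=
  ⟨ge_of_tendsto (tendsto_conv hs) (Eventually.of_forall fun n => (conv_bounds hs n).1),
   le_of_tendsto (tendsto_conv hs) (Eventually.of_forall fun n => (conv_bounds hs n).2)⟩

lemma cfVal_shift {s : ℕ → ℝ} (hs : Ok s) :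
    cfVal s = s 0 + 1 / cfVal (fun i => s (i+1)) := by
  have hs' := ok_shift hs
  have h1 : (1:ℝ) ≤ cfVal (fun i => s (i+1)) := (cfVal_bounds hs').1
  have hne : cfVal (fun i => s (i+1)) ≠ 0 := by linarith
  have hA : Tendsto (fun n => conv s (n+1)) atTop
      (nhds (s 0 + 1 / cfVal (fun i => s (i+1)))) := by
    simp only [conv_succ]
    exact tendsto_const_nhds.add (tendsto_const_nhds.div (tendsto_conv hs') hne)
  have hB : Tendsto (fun n => conv s (n+1)) atTop (nhds (cfVal s)) :=
    (tendsto_add_atTop_iff_nat 1).mpr (tendsto_conv hs)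
  exact tendsto_nhds_unique hB hA

lemma cfVal_shift_bounds {s : ℕ → ℝ} (hs : Ok s) :
    s 0 + 1/3 ≤ cfVal s ∧ cfVal s ≤ s 0 + 3/4 := by
  have hs' := ok_shift hs
  have h1 : (4:ℝ)/3 ≤ cfVal (fun i => s (i+1)) := by
    have := cfVal_shift hs'
    have h2 := (cfVal_bounds (ok_shift hs')).1
    have h3 := (cfVal_bounds (ok_shift hs')).2
    have h0 : (0:ℝ) < cfVal (fun i => (fun i => s (i+1)) (i+1)) := by linarith
    have : 1/3 ≤ 1 / cfVal (fun i => (fun i => s (i+1)) (i+1)) := by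
      apply one_div_le_one_div_of_le <;> linarith
    have hss := (hs' 0).1
    linarith [cfVal_shift hs']
  have h3 : cfVal (fun i => s (i+1)) ≤ 3 := (cfVal_bounds hs').2
  have h0 : (0:ℝ) < cfVal (fun i => s (i+1)) := by linarith
  rw [cfVal_shift hs]
  constructor
  · have : 1/3 ≤ 1 / cfVal (fun i => s (i+1)) := by
      apply one_div_le_one_div_of_le <;> linarith
    linarith
  · have : 1 / cfVal (fun i => s (i+1)) ≤ 3/4 := by
      rw [div_le_iff₀ h0]; linarith
    linarith

lemma cfVal_compare : ∀ (k : ℕ) (s t : ℕ → ℝ), Ok s → Ok t →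
    (∀ m, m < k → s m = t m) → s k = 1 → t k = 2 →
    (Even k → cfVal s < cfVal t) ∧ (¬ Even k → cfVal t < cfVal s) := by
  intro k
  induction k with
  | zero =>
    intro s t hs ht _ hsk htk
    refine ⟨fun _ => ?_, fun h => absurd Even.zero h⟩
    have h1 := (cfVal_shift_bounds hs).2
    have h2 := (cfVal_shift_bounds ht).1
    rw [hsk] at h1; rw [htk] at h2
    linarith
  | succ k ih =>
    intro s t hs ht hagree hsk htk
    have h0 : s 0 = t 0 := hagree 0 (Nat.succ_pos k)
    have hs' := ok_shift hs
    have ht' := ok_shift ht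
    obtain ⟨ihE, ihO⟩ := ih (fun i => s (i+1)) (fun i => t (i+1)) hs' ht'
      (fun m hm => hagree (m+1) (by omega)) hsk htk
    have hS1 : (1:ℝ) ≤ cfVal (fun i => s (i+1)) := (cfVal_bounds hs').1
    have hT1 : (1:ℝ) ≤ cfVal (fun i => t (i+1)) := (cfVal_bounds ht').1
    rw [cfVal_shift hs, cfVal_shift ht, h0]
    constructor
    · intro hE
      have hk : ¬ Even k := by rwa [Nat.even_add_one] at hE
      have := ihO hk
      have : 1 / cfVal (fun i => s (i+1)) < 1 / cfVal (fun i => t (i+1)) :=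
        one_div_lt_one_div_of_lt (by linarith) this
      linarith
    · intro hE
      have hk : Even k := by rw [Nat.even_add_one] at hE; exact not_not.mp hE
      have := ihE hk
      have : 1 / cfVal (fun i => t (i+1)) < 1 / cfVal (fun i => s (i+1)) :=
        one_div_lt_one_div_of_lt (by linarith) this
      linarith

/-- partial quotient sequence for `valTwo`. -/
noncomputable def uSeq (E : ℕ → Bool) : ℕ → ℝ := fun n => if n < 2 then 2 else chiSeq E (n - 2)

/-- partial quotient sequence for `valZero`. -/
noncomputable def zSeq (F : ℕ → Bool) : ℕ → ℝ :=
  fun n => if n = 0 then 0 else if n < 3 then 1 else chiSeq F (n - 3)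

lemma valTwo_eq (E : ℕ → Bool) : valTwo E = cfVal (uSeq E) := rfl
lemma valZero_eq' (F : ℕ → Bool) : valZero F = cfVal (zSeq F) := rfl

lemma chiSeq_mem (E : ℕ → Bool) (n : ℕ) : 1 ≤ chiSeq E n ∧ chiSeq E n ≤ 2 := by
  unfold chiSeq; split <;> norm_num

lemma ok_uSeq (E : ℕ → Bool) : Ok (uSeq E) := by
  intro n; unfold uSeq; split
  · norm_num
  · exact chiSeq_mem E (n-2)

lemma valTwo_lt {E F : ℕ → Bool} (n : ℕ) (hag : ∀ m, m < n → E m = F m)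
    (hE : E n = true) (hF : F n = false) : valTwo E < valTwo F := by
  rw [valTwo_eq, valTwo_eq]
  have hagree : ∀ m, m < 2*n + 2 → uSeq E m = uSeq F m := by
    intro m hm
    unfold uSeq
    split
    · rfl
    · rename_i h
      have hlt : (m - 2) / 2 < n := by omega
      unfold chiSeq
      rw [hag _ hlt]
  have hsE : uSeq E (2*n + 2) = 1 := by
    unfold uSeq chiSeq
    have h1 : ¬ (2*n + 2 < 2) := by omega
    have h2 : (2*n + 2 - 2) / 2 = n := by omega
    rw [if_neg h1, h2, hE]; norm_num
  have hsF : uSeq F (2*n + 2) = 2 := by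
    unfold uSeq chiSeq
    have h1 : ¬ (2*n + 2 < 2) := by omega
    have h2 : (2*n + 2 - 2) / 2 = n := by omega
    rw [if_neg h1, h2, hF]; norm_num
  exact (cfVal_compare (2*n+2) (uSeq E) (uSeq F) (ok_uSeq E) (ok_uSeq F) hagree hsE hsF).1
    ⟨n+1, by ring⟩

lemma cfListVal_bounds : ∀ (l : List ℝ), l ≠ [] → (∀ x ∈ l, 1 ≤ x ∧ x ≤ 2) →
    1 ≤ cfListVal l ∧ cfListVal l ≤ 3 := by
  intro l
  induction l with
  | nil => intro h; exact absurd rfl h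
  | cons x t ih =>
    intro _ hmem
    cases t with
    | nil =>
      have := hmem x (by simp)
      simp only [cfListVal]
      exact ⟨this.1, by linarith [this.2]⟩
    | cons y u =>
      obtain ⟨h1, h3⟩ := ih (by simp) (fun z hz => hmem z (by simp [hz]))
      rw [cfListVal_cons x (y::u) (by simp)]
      have h0 : (0:ℝ) < cfListVal (y::u) := by linarith
      have hd1 : 1 / cfListVal (y::u) ≤ 1 := by rw [div_le_one h0]; linarith
      have hd2 : (1:ℝ)/3 ≤ 1 / cfListVal (y::u) := by
        apply one_div_le_one_div_of_le <;> linarith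
      have := hmem x (by simp)
      exact ⟨by linarith [this.1], by linarith [this.2]⟩

lemma finId (l : List ℝ) (hl : l ≠ []) (h : ∀ x ∈ l, 1 ≤ x ∧ x ≤ 2) :
    cfListVal (0 :: 1 :: 1 :: l) + cfListVal (2 :: 2 :: l) = 3 := by
  obtain ⟨h1, h3⟩ := cfListVal_bounds l hl h
  rw [cfListVal_cons 0 (1::1::l) (by simp), cfListVal_cons 1 (1::l) (by simp),
      cfListVal_cons 1 l hl, cfListVal_cons 2 (2::l) (by simp), cfListVal_cons 2 l hl]
  set W := cfListVal l with hWd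
  have hW : (0:ℝ) < W := by linarith
  have e2 : (1:ℝ) + 1/W ≠ 0 := by positivity
  have e3 : (1:ℝ) + 1/(1+1/W) ≠ 0 := by positivity
  have e4 : (2:ℝ) + 1/W ≠ 0 := by positivity
  field_simp
  ring
lemma range_map_z (F : ℕ → Bool) (n : ℕ) :
    (List.range (n+4)).map (zSeq F) = 0 :: 1 :: 1 :: (List.range (n+1)).map (chiSeq F) := by
  have e1 := range_map_succ (zSeq F) (n+2)
  have e2 := range_map_succ (fun i => zSeq F (i+1)) (n+1)
  have e3 := range_map_succ (fun i => zSeq F (i+1+1)) n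
  rw [show n+4 = n+2+1+1 from rfl, e1, e2, e3]
  have hz0 : zSeq F 0 = 0 := rfl
  have hz1 : zSeq F (0+1) = 1 := rfl
  have hz2 : zSeq F (0+1+1) = 1 := rfl
  rw [hz0, hz1, hz2]
  congr 3

lemma range_map_u (F : ℕ → Bool) (n : ℕ) :
    (List.range (n+3)).map (uSeq F) = 2 :: 2 :: (List.range (n+1)).map (chiSeq F) := by
  have e1 := range_map_succ (uSeq F) (n+1)
  have e2 := range_map_succ (fun i => uSeq F (i+1)) n
  rw [show n+3 = n+1+1+1 from rfl, e1, e2]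
  have hz0 : uSeq F 0 = 2 := rfl
  have hz1 : uSeq F (0+1) = 2 := rfl
  rw [hz0, hz1]
  congr 2

lemma conv_z_eq (F : ℕ → Bool) (n : ℕ) :
    conv (zSeq F) (n+3) = 3 - conv (uSeq F) (n+2) := by
  have hmem : ∀ x ∈ (List.range (n+1)).map (chiSeq F), 1 ≤ x ∧ x ≤ 2 := by
    intro x hx
    obtain ⟨i, _, rfl⟩ := List.mem_map.mp hx
    exact chiSeq_mem F i
  have hne : (List.range (n+1)).map (chiSeq F) ≠ [] := by simp
  have := finId ((List.range (n+1)).map (chiSeq F)) hne hmem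
  unfold conv
  rw [show n+3+1 = n+4 from rfl, range_map_z, show n+2+1 = n+3 from rfl, range_map_u]
  linarith

lemma valZero_id (F : ℕ → Bool) : valZero F = 3 - valTwo F := by
  have hT : Filter.Tendsto (conv (uSeq F)) Filter.atTop (nhds (valTwo F)) := by
    rw [valTwo_eq]; exact tendsto_conv (ok_uSeq F)
  have h2 : Filter.Tendsto (fun n => conv (zSeq F) (n+3)) Filter.atTop
      (nhds (3 - valTwo F)) := by
    simp only [conv_z_eq]
    exact tendsto_const_nhds.sub ((tendsto_add_atTop_iff_nat 2).mpr hT)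
  have h3 : Filter.Tendsto (conv (zSeq F)) Filter.atTop (nhds (3 - valTwo F)) :=
    (tendsto_add_atTop_iff_nat 3).mp h2
  rw [valZero_eq']
  exact h3.limUnder_eq

lemma lex_cases (E F : ℕ → Bool) (hne : E ≠ F) :
    (∃ n, (∀ m, m < n → E m = F m) ∧ E n = true ∧ F n = false) ∨
    (∃ n, (∀ m, m < n → F m = E m) ∧ F n = true ∧ E n = false) := by
  have hex : ∃ n, E n ≠ F n := by
    by_contra h
    push_neg at h
    exact hne (funext h)
  classical
  let n := Nat.find hex
  have hn : E n ≠ F n := Nat.find_spec hex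
  have hmin : ∀ m, m < n → E m = F m := fun m hm => not_not.mp (Nat.find_min hex hm)
  cases hEn : E n <;> cases hFn : F n
  · rw [hEn, hFn] at hn; exact absurd rfl hn
  · exact Or.inr ⟨n, fun m hm => (hmin m hm).symm, hFn, hEn⟩
  · exact Or.inl ⟨n, hmin, hEn, hFn⟩
  · rw [hEn, hFn] at hn; exact absurd rfl hn

/-- `[2; 2, E] + [0; 1, 1, F] ≤ 3` iff `E ⪯ F`, and `≥ 3` iff `F ⪯ E`. -/
theorem cut_value_lexicographic (E F : ℕ → Bool) :
    (valTwo E + valZero F ≤ 3 ↔ lexLe E F) ∧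
    (3 ≤ valTwo E + valZero F ↔ lexLe F E) := by
  rw [valZero_id F]
  constructor
  · constructor
    · intro h
      by_contra hn
      have hne : E ≠ F := fun he => hn (Or.inl he)
      rcases lex_cases E F hne with ⟨n, h1, h2, h3⟩ | ⟨n, h1, h2, h3⟩
      · exact hn (Or.inr ⟨n, h1, h2, h3⟩)
      · have := valTwo_lt n h1 h2 h3
        linarith
    · rintro (rfl | ⟨n, h1, h2, h3⟩)
      · linarith
      · have := valTwo_lt n h1 h2 h3
        linarith
  · constructor
    · intro h
      by_contra hn
      have hne : F ≠ E := fun he => hn (Or.inl he)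
      rcases lex_cases F E hne with ⟨n, h1, h2, h3⟩ | ⟨n, h1, h2, h3⟩
      · exact hn (Or.inr ⟨n, h1, h2, h3⟩)
      · have := valTwo_lt n h1 h2 h3
        linarith
    · rintro (he | ⟨n, h1, h2, h3⟩)
      · rw [he]; linarith
      · have := valTwo_lt n h1 h2 h3
        linarith
end

section
/- Let (Sₙ)_{n≥1} be a sequence of non-negative integers with S_{n+1} − Sₙ ∈ {0, 1}, S₁ ∈ {0,1}, and satisfying Sₙ + Sₘ ≤ S_{n+m} ≤ Sₙ + Sₘ + 1 for all m, n ≥ 1. Then there exists ξ ∈ [0, 1] such that either Sₙ = ⌊nξ⌋ for all n ≥ 1, or Sₙ = −⌊−nξ⌋ − 1 for all n ≥ 1. -/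
/-- If `(Sₙ)` is a `{0,1}`-step sequence with `S₁ ∈ {0,1}` satisfying
`Sₙ + Sₘ ≤ S_{n+m} ≤ Sₙ + Sₘ + 1` for all `m, n ≥ 1`, then there is `ξ ∈ [0,1]`
such that either `Sₙ = ⌊nξ⌋` for all `n ≥ 1`, or `Sₙ = −⌊−nξ⌋ − 1` for all `n ≥ 1`. -/
theorem balanced_counting_is_mechanical (S : ℕ → ℕ)
    (hstep : ∀ n : ℕ, 1 ≤ n → S (n + 1) = S n ∨ S (n + 1) = S n + 1)
    (hS1 : S 1 = 0 ∨ S 1 = 1)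
    (hsub : ∀ m n : ℕ, 1 ≤ m → 1 ≤ n →
      S n + S m ≤ S (n + m) ∧ S (n + m) ≤ S n + S m + 1) :
    ∃ ξ : ℝ, 0 ≤ ξ ∧ ξ ≤ 1 ∧
      ((∀ n : ℕ, 1 ≤ n → (S n : ℤ) = ⌊(n : ℝ) * ξ⌋) ∨
       (∀ n : ℕ, 1 ≤ n → (S n : ℤ) = -⌊-((n : ℝ) * ξ)⌋ - 1)) := by
  -- S n ≤ n for n ≥ 1
  have hSle : ∀ n : ℕ, 1 ≤ n → S n ≤ n := by
    intro n hn
    induction n, hn using Nat.le_induction with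
    | base => rcases hS1 with h | h <;> omega
    | succ k hk ih => rcases hstep k hk with h | h <;> omega
  -- iterated superadditivity
  have L1 : ∀ k : ℕ, 1 ≤ k → ∀ n : ℕ, 1 ≤ n → k * S n ≤ S (k * n) := by
    intro k hk
    induction k, hk using Nat.le_induction with
    | base => intro n hn; simp
    | succ k hk ih =>
      intro n hn
      have hkn : 1 ≤ k * n := Nat.one_le_iff_ne_zero.mpr (Nat.mul_ne_zero (by omega) (by omega))
      have h1 := (hsub n (k * n) hn hkn).1
      have h2 := ih n hn
      have h3 : (k + 1) * n = k * n + n := by ring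
      rw [h3]; nlinarith
  -- iterated subadditivity
  have L2 : ∀ k : ℕ, 1 ≤ k → ∀ n : ℕ, 1 ≤ n → S (k * n) + 1 ≤ k * (S n + 1) := by
    intro k hk
    induction k, hk using Nat.le_induction with
    | base => intro n hn; simp
    | succ k hk ih =>
      intro n hn
      have hkn : 1 ≤ k * n := Nat.one_le_iff_ne_zero.mpr (Nat.mul_ne_zero (by omega) (by omega))
      have h1 := (hsub n (k * n) hn hkn).2
      have h2 := ih n hn
      have h3 : (k + 1) * n = k * n + n := by ring
      rw [h3]; nlinarith
  -- cross inequality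
  have cross : ∀ m : ℕ, 1 ≤ m → ∀ n : ℕ, 1 ≤ n → m * S n < n * (S m + 1) := by
    intro m hm n hn
    calc m * S n ≤ S (m * n) := L1 m hm n hn
      _ = S (n * m) := by rw [Nat.mul_comm]
      _ < n * (S m + 1) := L2 n hn m hm
  set A : Set ℝ := (fun n : ℕ => (S n : ℝ) / n) '' {n | 1 ≤ n} with hA
  have hne : A.Nonempty := ⟨(S 1 : ℝ) / 1, ⟨1, by norm_num, by norm_num⟩⟩
  have hbdd : ∀ x ∈ A, x ≤ 1 := by
    rintro x ⟨n, hn, rfl⟩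
    have := hSle n hn
    simp only
    rw [div_le_one (by exact_mod_cast hn)]
    exact_mod_cast this
  set ξ : ℝ := sSup A with hxi
  have hub : ∀ n : ℕ, 1 ≤ n → (S n : ℝ) / n ≤ ξ := by
    intro n hn
    exact le_csSup ⟨1, fun x hx => hbdd x hx⟩ ⟨n, hn, rfl⟩
  have hlb : ∀ m : ℕ, 1 ≤ m → ξ ≤ ((S m : ℝ) + 1) / m := by
    intro m hm
    apply csSup_le hne
    rintro x ⟨n, hn, rfl⟩
    have hc := cross m hm n hn
    simp only
    rw [div_le_div_iff₀ (by exact_mod_cast hn) (by exact_mod_cast hm)]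
    have h : (m : ℝ) * S n ≤ (n : ℝ) * (S m + 1) - 1 := by
      have : (m : ℝ) * S n + 1 ≤ (n : ℝ) * (S m + 1) := by exact_mod_cast hc
      linarith
    linarith
  -- key inequalities
  have key1 : ∀ n : ℕ, 1 ≤ n → (S n : ℝ) ≤ (n : ℝ) * ξ := by
    intro n hn
    have := hub n hn
    rw [div_le_iff₀ (by exact_mod_cast hn)] at this
    linarith
  have key2 : ∀ n : ℕ, 1 ≤ n → (n : ℝ) * ξ ≤ (S n : ℝ) + 1 := by
    intro n hn
    have := hlb n hn
    rw [le_div_iff₀ (by exact_mod_cast hn)] at this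
    linarith
  have h0 : (0 : ℝ) ≤ ξ := by
    have := hub 1 (le_refl 1)
    have h1 : (0 : ℝ) ≤ (S 1 : ℝ) / 1 := by positivity
    linarith
  have h1' : ξ ≤ 1 := csSup_le hne hbdd
  refine ⟨ξ, h0, h1', ?_⟩
  by_cases hbad : ∃ m : ℕ, 1 ≤ m ∧ (m : ℝ) * ξ = (S m : ℝ) + 1
  · right
    obtain ⟨m, hm, hmx⟩ := hbad
    intro n hn
    have hmn : 1 ≤ m * n := Nat.one_le_iff_ne_zero.mpr (Nat.mul_ne_zero (by omega) (by omega))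
    have hnm : 1 ≤ n * m := by rwa [Nat.mul_comm]
    -- claim: n * ξ ≠ S n
    have hne' : (n : ℝ) * ξ ≠ (S n : ℝ) := by
      intro heq
      -- S (m * n) = m * n * ξ
      have e1 : (S (m * n) : ℝ) = (m : ℝ) * n * ξ := by
        have hl : (m : ℝ) * (S n : ℝ) ≤ (S (m * n) : ℝ) := by exact_mod_cast L1 m hm n hn
        have hu : (S (m * n) : ℝ) ≤ ((m * n : ℕ) : ℝ) * ξ := key1 (m * n) hmn
        push_cast at hu
        rw [mul_assoc, heq]
        rw [mul_assoc] at hu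
        rw [heq] at hu
        linarith
      -- S (n * m) + 1 ≤ n * (S m + 1) = n * m * ξ
      have e2 : (S (n * m) : ℝ) + 1 ≤ (n : ℝ) * m * ξ := by
        have h2 : (S (n * m) : ℝ) + 1 ≤ (n : ℝ) * ((S m : ℝ) + 1) := by
          exact_mod_cast L2 n hn m hm
        rw [← hmx] at h2
        linarith [h2]
      rw [Nat.mul_comm n m] at e2
      rw [e1] at e2
      have : (n : ℝ) * m * ξ = (m : ℝ) * n * ξ := by ring
      linarith
    have hlt : (S n : ℝ) < (n : ℝ) * ξ := lt_of_le_of_ne (key1 n hn) (fun h => hne' h.symm)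
    have hfl : ⌊-((n : ℝ) * ξ)⌋ = -(S n : ℤ) - 1 := by
      apply Int.floor_eq_iff.mpr
      constructor
      · push_cast
        have := key2 n hn
        linarith
      · push_cast
        linarith
    rw [hfl]; ring
  · left
    intro n hn
    have hne' : (n : ℝ) * ξ ≠ (S n : ℝ) + 1 := fun h => hbad ⟨n, hn, h⟩
    have hlt : (n : ℝ) * ξ < (S n : ℝ) + 1 := lt_of_le_of_ne (key2 n hn) hne'
    symm
    apply Int.floor_eq_iff.mpr
    constructor
    · push_cast; exact key1 n hn
    · push_cast; linarith
end

section
/- Let w = w₁…w_k be a Christoffel word over {a, b} (i.e., w = αβ for a pair (α, β) obtained from (a, b) by finitely many applications of Ū(α,β) = (αβ, β), V̄(α,β) = (α, αβ)), indices taken cyclically. Then for every position j with w_j w_{j+1} = ba, there exists r ≥ 1 such that the word w_{j−1}…w_{j−r+1} equals w_{j+2}…w_{j+r}, w_{j−r} = a, and w_{j+r+1} = b; that is, every occurrence of ba in w extends (cyclically) to a factor of the form a θᵀ b a θ b. -/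
/-- The bi-infinite periodic word `w^∞`, indexed by `ℤ`. -/
def cyc (w : List Bool) : ℤ → Bool := fun n => w.getD (n % (w.length : ℤ)).toNat false

def img (u c : Bool) : List Bool :=
  if u then (if c then [true] else [false, true])
  else (if c then [false, true] else [false])

def app (u : Bool) (w : List Bool) : List Bool := w.flatMap (img u)

lemma img_len_pos (u c : Bool) : 1 ≤ (img u c).length := by
  cases u <;> cases c <;> simp [img]

lemma app_append (u : Bool) (x y : List Bool) :
    app u (x ++ y) = app u x ++ app u y := by
  simp [app, List.flatMap_append]

lemma app_cons (u : Bool) (c : Bool) (l : List Bool) :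
    app u (c :: l) = img u c ++ app u l := by
  simp [app]

def Good (f : ℤ → Bool) : Prop :=
  ∀ j : ℤ, f j = true → f (j + 1) = false →
    ∃ r : ℕ, 1 ≤ r ∧
      (∀ i : ℕ, 1 ≤ i → i < r → f (j - i) = f (j + 1 + i)) ∧
      f (j - r) = false ∧ f (j + 1 + r) = true

def pref (u : Bool) (g : ℕ → Bool) : ℕ → List Bool
  | 0 => []
  | t + 1 => pref u g t ++ img u (g t)

def om (u : Bool) (g : ℕ → Bool) (i : ℕ) : Bool := (pref u g (i + 1)).getD i false

lemma pref_len_lb (u : Bool) (g : ℕ → Bool) : ∀ t, t ≤ (pref u g t).length := by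
  intro t; induction t with
  | zero => simp [pref]
  | succ t ih => simp only [pref, List.length_append]; have := img_len_pos u (g t); omega

lemma pref_prefix (u : Bool) (g : ℕ → Bool) {t t' : ℕ} (h : t ≤ t') :
    ∃ z, pref u g t' = pref u g t ++ z := by
  induction t' with
  | zero => exact ⟨[], by rw [Nat.le_zero.mp h]; simp⟩
  | succ t' ih =>
    rcases Nat.lt_or_ge t (t' + 1) with h' | h'
    · obtain ⟨z, hz⟩ := ih (by omega)
      exact ⟨z ++ img u (g t'), by simp [pref, hz]⟩
    · have : t = t' + 1 := by omega
      exact ⟨[], by simp [this]⟩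

lemma pref_getD_stable (u : Bool) (g : ℕ → Bool) {t t' i : ℕ}
    (h : i < (pref u g t).length) (h' : t ≤ t') :
    (pref u g t').getD i false = (pref u g t).getD i false := by
  obtain ⟨z, hz⟩ := pref_prefix u g h'
  rw [hz, List.getD_append _ _ _ _ h]

lemma om_eq_pref (u : Bool) (g : ℕ → Bool) {t i : ℕ} (h : i < (pref u g t).length) :
    om u g i = (pref u g t).getD i false := by
  unfold om
  rcases Nat.le_total t (i + 1) with h' | h'
  · rw [pref_getD_stable u g h h']
  · exact (pref_getD_stable u g (lt_of_lt_of_le (Nat.lt_succ_self i) (pref_len_lb u g (i+1))) h').symm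

lemma om_block (u : Bool) (g : ℕ → Bool) {t k : ℕ} (h : k < (img u (g t)).length) :
    om u g ((pref u g t).length + k) = (img u (g t)).getD k false := by
  have hlt : (pref u g t).length + k < (pref u g (t + 1)).length := by
    simp only [pref, List.length_append]; omega
  rw [om_eq_pref u g hlt]
  simp only [pref]
  rw [List.getD_append_right _ _ _ _ (by omega)]
  congr 1; omega

lemma pref_congr (u : Bool) {P Q : ℕ → Bool} {r : ℕ} (h : ∀ t < r, P t = Q t) :
    pref u P r = pref u Q r := by
  induction r with
  | zero => rfl
  | succ r ih =>
    simp only [pref, ih (fun t ht => h t (by omega)), h r (by omega)]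

lemma getD_reverse {l : List Bool} {k : ℕ} (hk : k < l.length) :
    l.reverse.getD k false = l.getD (l.length - 1 - k) false := by
  rw [List.getD_eq_getElem _ _ (by simpa using hk), List.getD_eq_getElem _ _ (by omega)]
  rw [List.getElem_reverse]

lemma right_lemma (u : Bool) (f F : ℤ → Bool) (σ : ℤ → ℤ)
    (hσ1 : ∀ m, σ (m + 1) = σ m + (img u (f m)).length)
    (hσ2 : ∀ m (k : ℕ), k < (img u (f m)).length →
      F (σ m + k) = (img u (f m)).getD k false)
    (M : ℤ) : ∀ i : ℕ, F (σ M + i) = om u (fun t => f (M + t)) i := by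
  set g : ℕ → Bool := fun t => f (M + t) with hg
  have σ_pref : ∀ t : ℕ, σ M + ((pref u g t).length : ℤ) = σ (M + t) := by
    intro t; induction t with
    | zero => simp [pref]
    | succ t ih =>
      have h1 := hσ1 (M + t)
      have : (M : ℤ) + (t + 1 : ℕ) = (M + t) + 1 := by push_cast; ring
      rw [this, h1, ← ih]
      simp only [pref, List.length_append, hg]
      push_cast; ring
  have decomp : ∀ i : ℕ, ∃ t k, k < (img u (g t)).length ∧ i = (pref u g t).length + k := by
    intro i; induction i with
    | zero => exact ⟨0, 0, img_len_pos u (g 0), by simp [pref]⟩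
    | succ i ih =>
      obtain ⟨t, k, hk, hi⟩ := ih
      rcases lt_or_ge (k + 1) (img u (g t)).length with h | h
      · exact ⟨t, k + 1, h, by omega⟩
      · refine ⟨t + 1, 0, img_len_pos u (g (t+1)), ?_⟩
        simp only [pref, List.length_append]; omega
  intro i
  obtain ⟨t, k, hk, hi⟩ := decomp i
  have : σ M + (i : ℤ) = σ (M + t) + k := by rw [← σ_pref t]; push_cast [hi]; ring
  rw [this, hσ2 (M + t) k (by simpa [hg] using hk), hi, om_block u g hk]

def revs (u : Bool) (f : ℤ → Bool) (m : ℤ) : ℕ → List Bool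
  | 0 => []
  | t + 1 => revs u f m t ++ (img u (f (m - 1 - t))).reverse

lemma revs_len_lb (u : Bool) (f : ℤ → Bool) (m : ℤ) : ∀ t, t ≤ (revs u f m t).length := by
  intro t; induction t with
  | zero => simp [revs]
  | succ t ih =>
    simp only [revs, List.length_append, List.length_reverse]
    have := img_len_pos u (f (m - 1 - t)); omega

section Left
variable (u : Bool) (f F : ℤ → Bool) (σ : ℤ → ℤ) (m : ℤ)

lemma revs_sigma
    (hσ1 : ∀ m, σ (m + 1) = σ m + (img u (f m)).length) :
    ∀ t : ℕ, σ m - ((revs u f m t).length : ℤ) = σ (m - t) := by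
  intro t; induction t with
  | zero => simp [revs]
  | succ t ih =>
    have h1 := hσ1 (m - 1 - t)
    have he : (m - 1 - (t:ℤ)) + 1 = m - t := by ring
    rw [he] at h1
    have he2 : m - ((t:ℕ) + 1 : ℕ) = m - 1 - t := by push_cast; ring
    rw [he2]
    simp only [revs, List.length_append, List.length_reverse]
    push_cast
    omega

lemma revs_F
    (hσ1 : ∀ m, σ (m + 1) = σ m + (img u (f m)).length)
    (hσ2 : ∀ m (k : ℕ), k < (img u (f m)).length →
      F (σ m + k) = (img u (f m)).getD k false) :
    ∀ t, ∀ i : ℕ, i < (revs u f m t).length →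
      F (σ m - 1 - i) = (revs u f m t).getD i false := by
  intro t; induction t with
  | zero => intro i hi; simp [revs] at hi
  | succ t ih =>
    intro i hi
    rcases lt_or_ge i (revs u f m t).length with h | h
    · rw [revs, List.getD_append _ _ _ _ h]; exact ih i h
    · have hlen : (revs u f m (t+1)).length
          = (revs u f m t).length + (img u (f (m - 1 - t))).length := by
        simp [revs]
      have hk' : i - (revs u f m t).length < (img u (f (m - 1 - t))).length := by omega
      have hs1 := revs_sigma u f σ m hσ1 t
      have h1 := hσ1 (m - 1 - t)
      have he : (m - 1 - (t:ℤ)) + 1 = m - t := by ring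
      rw [he] at h1
      have hpos : σ m - 1 - (i : ℤ) = σ (m - 1 - t)
          + (((img u (f (m - 1 - t))).length - 1 - (i - (revs u f m t).length) : ℕ) : ℤ) := by
        have c1 : (((img u (f (m - 1 - t))).length - 1 - (i - (revs u f m t).length) : ℕ) : ℤ)
            = ((img u (f (m - 1 - t))).length : ℤ) - 1 - ((i : ℤ) - ((revs u f m t).length : ℤ)) := by
          omega
        rw [c1]; omega
      rw [hpos, hσ2 (m - 1 - t) _ (by omega)]
      rw [revs, List.getD_append_right _ _ _ _ h]
      rw [getD_reverse (by omega)]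
end Left

lemma idV (c : Bool) : [false] ++ (img false c).reverse = img false c ++ [false] := by
  cases c <;> rfl

lemma idU (c : Bool) : (img true c).reverse ++ [true] = [true] ++ img true c := by
  cases c <;> rfl

lemma claimV3 (f : ℤ → Bool) (m : ℤ) :
    ∀ t, [false] ++ revs false f m t = pref false (fun s => f (m - 1 - s)) t ++ [false] := by
  intro t; induction t with
  | zero => rfl
  | succ t ih =>
    show [false] ++ (revs false f m t ++ (img false (f (m - 1 - t))).reverse) = _
    rw [← List.append_assoc, ih, List.append_assoc, idV, ← List.append_assoc]
    rfl

lemma claimU3 (f : ℤ → Bool) (m : ℤ) :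
    ∀ t, revs true f m t ++ [true] = [true] ++ pref true (fun s => f (m - 1 - s)) t := by
  intro t; induction t with
  | zero => rfl
  | succ t ih =>
    show (revs true f m t ++ (img true (f (m - 1 - t))).reverse) ++ [true] = _
    rw [List.append_assoc, idU, ← List.append_assoc, ih, List.append_assoc]
    rfl

lemma claim4 (u : Bool) (f : ℤ → Bool) (m : ℤ) :
    ∀ t, pref u (fun s => if s = 0 then false else f (m - s)) (t + 1)
      = img u false ++ pref u (fun s => f (m - 1 - s)) t := by
  intro t; induction t with
  | zero => show [] ++ img u false = img u false ++ []; simp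
  | succ t ih =>
    show pref u _ (t+1) ++ img u (if (t+1 : ℕ) = 0 then false else f (m - (t+1 : ℕ))) = _
    rw [ih]
    have : (if (t+1 : ℕ) = 0 then false else f (m - ((t:ℕ)+1 : ℕ))) = f (m - 1 - t) := by
      simp only [Nat.succ_ne_zero, if_false]
      congr 1; push_cast; ring
    rw [this, List.append_assoc]
    rfl

lemma imgV0 (c : Bool) : (img false c).getD 0 false = false := by cases c <;> rfl
lemma imgU0 (c : Bool) : (img true c).getD 0 false = c := by cases c <;> rfl

lemma left_lemma_V (f F : ℤ → Bool) (σ : ℤ → ℤ) (m : ℤ)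
    (hσ1 : ∀ m, σ (m + 1) = σ m + (img false (f m)).length)
    (hσ2 : ∀ m (k : ℕ), k < (img false (f m)).length →
      F (σ m + k) = (img false (f m)).getD k false) :
    ∀ i : ℕ, 1 ≤ i →
      F (σ m + 1 - i) = om false (fun t => if t = 0 then false else f (m - t)) i := by
  intro i hi
  rcases Nat.lt_or_ge i 2 with h2 | h2
  · have hi1 : i = 1 := by omega
    subst hi1
    have hL : F (σ m + 1 - (1:ℕ)) = F (σ m + ((0:ℕ) : ℤ)) := by norm_num
    rw [hL, hσ2 m 0 (img_len_pos false (f m)), imgV0]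
    have hlen : (1:ℕ) < (pref false (fun t => if t = 0 then false else f (m - t)) 2).length := by
      have := pref_len_lb false (fun t => if t = 0 then false else f (m - t)) 2; omega
    rw [om_eq_pref _ _ hlen, claim4]
    symm
    show (img false false ++ ([] ++ img false (f (m - 1 - (0:ℕ))))).getD 1 false = false
    have h4 : img false false = [false] := rfl
    rw [h4, List.getD_append_right _ _ _ _ (by simp), List.nil_append]
    simpa using imgV0 (f (m - 1 - (0:ℕ)))
  · -- i ≥ 2
    have hlenC : i ≤ (pref false (fun s => f (m - 1 - s)) i).length := pref_len_lb _ _ i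
    have hlenP : i < (pref false (fun t => if t = 0 then false else f (m - t)) (i + 1)).length := by
      rw [claim4, List.length_append]
      have : img false false = [false] := rfl
      rw [this]; simp only [List.length_cons, List.length_nil]; omega
    rw [om_eq_pref _ _ hlenP, claim4]
    have e1 : (img false false ++ pref false (fun s => f (m - 1 - s)) i).getD i false
        = (pref false (fun s => f (m - 1 - s)) i).getD (i - 1) false := by
      have : img false false = [false] := rfl
      rw [this, List.getD_append_right _ _ _ _ (by simpa using hi)]
      rfl
    rw [e1, ← List.getD_append _ [false] _ _ (by omega), ← claimV3,
      List.getD_append_right _ _ _ _ (by simp only [List.length_cons, List.length_nil]; omega)]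
    have e2 : i - 1 - [false].length = i - 2 := by
      simp only [List.length_cons, List.length_nil]; omega
    rw [e2]
    have hrl : i - 2 < (revs false f m i).length := by
      have := revs_len_lb false f m i; omega
    have e3 : σ m + 1 - (i:ℤ) = σ m - 1 - ((i - 2 : ℕ) : ℤ) := by
      have : ((i - 2 : ℕ) : ℤ) = (i:ℤ) - 2 := by omega
      rw [this]; ring
    rw [e3]
    exact revs_F false f F σ m hσ1 hσ2 i (i - 2) hrl

lemma left_lemma_U (f F : ℤ → Bool) (σ : ℤ → ℤ) (m : ℤ)
    (hσ1 : ∀ m, σ (m + 1) = σ m + (img true (f m)).length)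
    (hσ2 : ∀ m (k : ℕ), k < (img true (f m)).length →
      F (σ m + k) = (img true (f m)).getD k false) :
    ∀ i : ℕ, 1 ≤ i →
      F (σ m - i) = om true (fun t => if t = 0 then false else f (m - t)) i := by
  intro i hi
  have hlenC : i ≤ (pref true (fun s => f (m - 1 - s)) i).length := pref_len_lb _ _ i
  have hlenP : i < (pref true (fun t => if t = 0 then false else f (m - t)) (i + 1)).length := by
    rw [claim4, List.length_append]
    have : img true false = [false, true] := rfl
    rw [this]; simp only [List.length_cons, List.length_nil]; omega
  rw [om_eq_pref _ _ hlenP, claim4]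
  have e0 : img true false = [false] ++ [true] := rfl
  rw [e0, List.append_assoc, List.getD_append_right _ _ _ _ (by simpa using hi)]
  have e1 : i - [false].length = i - 1 := by
    simp only [List.length_cons, List.length_nil]
  rw [e1, ← claimU3]
  have hrl : i - 1 < (revs true f m i).length := by
    have := revs_len_lb true f m i; omega
  rw [List.getD_append _ _ _ _ hrl]
  have e3 : σ m - (i:ℤ) = σ m - 1 - ((i - 1 : ℕ) : ℤ) := by
    have : ((i - 1 : ℕ) : ℤ) = (i:ℤ) - 1 := by omega
    rw [this]; ring
  rw [e3]
  exact revs_F true f F σ m hσ1 hσ2 i (i - 1) hrl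

theorem good_step (u : Bool) (f F : ℤ → Bool) (σ : ℤ → ℤ)
    (hσ1 : ∀ m, σ (m + 1) = σ m + (img u (f m)).length)
    (hσ2 : ∀ m (k : ℕ), k < (img u (f m)).length →
      F (σ m + k) = (img u (f m)).getD k false)
    (hσ3 : ∀ j, ∃ m, ∃ k : ℕ, k < (img u (f m)).length ∧ j = σ m + k)
    (hf : Good f) : Good F := by
  intro j hj hj1
  obtain ⟨m, k, hk, hjm⟩ := hσ3 j
  subst hjm
  cases u with
  | false =>
    cases hfm : f m with
    | false =>
      exfalso
      have hk0 : k = 0 := by rw [hfm] at hk; simp [img] at hk; omega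
      subst hk0
      rw [hσ2 m 0 (img_len_pos _ _), hfm] at hj
      simp [img] at hj
    | true =>
      have hk1 : k = 1 := by
        rcases Nat.lt_or_ge k 1 with h | h
        · exfalso
          have : k = 0 := by omega
          subst this
          rw [hσ2 m 0 (img_len_pos _ _), hfm] at hj
          simp [img] at hj
        · rw [hfm] at hk; simp [img] at hk; omega
      subst hk1
      have hw : (img false true).length = 2 := rfl
      have hσm1 : σ (m + 1) = σ m + 2 := by rw [hσ1 m, hfm, hw]; norm_num
      cases hfm1 : f (m + 1) with
      | true =>
        refine ⟨1, le_refl 1, by omega, ?_, ?_⟩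
        · have e : σ m + ((1:ℕ):ℤ) - ((1:ℕ):ℤ) = σ m + ((0:ℕ):ℤ) := by push_cast; ring
          rw [e, hσ2 m 0 (img_len_pos _ _), hfm, imgV0]
        · have e : σ m + ((1:ℕ):ℤ) + 1 + ((1:ℕ):ℤ) = σ (m + 1) + ((1:ℕ):ℤ) := by
            rw [hσm1]; push_cast; ring
          rw [e, hσ2 (m+1) 1 (by rw [hfm1]; simp [img]), hfm1]
          rfl
      | false =>
        obtain ⟨rv, hrv1, hsym, hend1, hend2⟩ := hf m hfm hfm1
        have hPQ : ∀ t, t < rv →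
            (if t = 0 then false else f (m - (t:ℤ))) = f (m + 1 + (t:ℤ)) := by
          intro t ht
          cases t with
          | zero => simpa using hfm1.symm
          | succ t => rw [if_neg (Nat.succ_ne_zero t)]; exact hsym (t+1) (by omega) ht
        have hprefeq : pref false (fun t : ℕ => if t = 0 then false else f (m - (t:ℤ))) rv
            = pref false (fun t : ℕ => f (m + 1 + (t:ℤ))) rv := pref_congr false hPQ
        have hlQ : rv ≤ (pref false (fun t : ℕ => f (m + 1 + (t:ℤ))) rv).length :=
          pref_len_lb _ _ rv
        have A := right_lemma false f F σ hσ1 hσ2 (m + 1)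
        have B := left_lemma_V f F σ m hσ1 hσ2
        have hPrv : (if rv = 0 then false else f (m - (rv:ℤ))) = false := by
          rw [if_neg (by omega)]; exact hend1
        have hlenP1 : (pref false (fun t : ℕ => if t = 0 then false else f (m - (t:ℤ))) (rv + 1)).length
            = (pref false (fun t : ℕ => f (m + 1 + (t:ℤ))) rv).length + 1 := by
          simp only [pref, List.length_append, hprefeq, hPrv]
          rfl
        refine ⟨(pref false (fun t : ℕ => f (m + 1 + (t:ℤ))) rv).length + 1, by omega, ?_, ?_, ?_⟩
        · intro i hi1 hi2
          have eL : σ m + ((1:ℕ):ℤ) - (i:ℤ) = σ m + 1 - (i:ℤ) := by push_cast; ring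
          have eR : σ m + ((1:ℕ):ℤ) + 1 + (i:ℤ) = σ (m + 1) + (i:ℤ) := by
            rw [hσm1]; push_cast; ring
          rw [eL, eR, B i hi1, A i]
          rcases Nat.lt_or_ge i (pref false (fun t : ℕ => f (m + 1 + (t:ℤ))) rv).length with h | h
          · rw [om_eq_pref false _ (hprefeq ▸ h), hprefeq, om_eq_pref false _ h]
          · have hieq : i = (pref false (fun t : ℕ => f (m + 1 + (t:ℤ))) rv).length := by omega
            subst hieq
            rw [show (pref false (fun t : ℕ => f (m + 1 + (t:ℤ))) rv).length
                = (pref false (fun t : ℕ => if t = 0 then false else f (m - (t:ℤ))) rv).length + 0 by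
                rw [hprefeq, Nat.add_zero]]
            rw [om_block false _ (by rw [hPrv]; exact img_len_pos _ _)]
            rw [show (pref false (fun t : ℕ => if t = 0 then false else f (m - (t:ℤ))) rv).length + 0
                = (pref false (fun t : ℕ => f (m + 1 + (t:ℤ))) rv).length + 0 by
                rw [hprefeq]]
            rw [om_block false _ (by rw [hend2]; exact img_len_pos _ _)]
            rw [hPrv, hend2, imgV0, imgV0]
        · have eL : σ m + ((1:ℕ):ℤ)
              - (((pref false (fun t : ℕ => f (m + 1 + (t:ℤ))) rv).length + 1 : ℕ):ℤ)
              = σ m + 1 - (((pref false (fun t : ℕ => f (m + 1 + (t:ℤ))) rv).length + 1 : ℕ):ℤ) := by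
            push_cast; ring
          rw [eL, B _ (by omega)]
          rw [show (pref false (fun t : ℕ => f (m + 1 + (t:ℤ))) rv).length + 1
              = (pref false (fun t : ℕ => if t = 0 then false else f (m - (t:ℤ))) (rv + 1)).length + 0 by
              rw [hlenP1, Nat.add_zero]]
          rw [om_block false _ (img_len_pos _ _), imgV0]
        · have eR : σ m + ((1:ℕ):ℤ) + 1
              + (((pref false (fun t : ℕ => f (m + 1 + (t:ℤ))) rv).length + 1 : ℕ):ℤ)
              = σ (m + 1) + (((pref false (fun t : ℕ => f (m + 1 + (t:ℤ))) rv).length + 1 : ℕ):ℤ) := by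
            rw [hσm1]; push_cast; ring
          rw [eR, A _]
          rw [om_block false _ (show 1 < (img false (f (m + 1 + (rv:ℤ)))).length by
            rw [hend2]; simp [img])]
          rw [hend2]
          rfl
  | true =>
    cases hfm : f m with
    | true =>
      have hk0 : k = 0 := by rw [hfm] at hk; simp [img] at hk; omega
      subst hk0
      have hw : (img true true).length = 1 := rfl
      have hσm1 : σ (m + 1) = σ m + 1 := by rw [hσ1 m, hfm, hw]; norm_num
      have hfm1 : f (m + 1) = false := by
        have e : σ m + ((0:ℕ):ℤ) + 1 = σ (m + 1) + ((0:ℕ):ℤ) := by rw [hσm1]; push_cast; ring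
        rw [e, hσ2 (m+1) 0 (img_len_pos _ _), imgU0] at hj1
        exact hj1
      obtain ⟨rv, hrv1, hsym, hend1, hend2⟩ := hf m hfm hfm1
      have hPQ : ∀ t, t < rv →
          (if t = 0 then false else f (m - (t:ℤ))) = f (m + 1 + (t:ℤ)) := by
        intro t ht
        cases t with
        | zero => simpa using hfm1.symm
        | succ t => rw [if_neg (Nat.succ_ne_zero t)]; exact hsym (t+1) (by omega) ht
      have hprefeq : pref true (fun t : ℕ => if t = 0 then false else f (m - (t:ℤ))) rv
          = pref true (fun t : ℕ => f (m + 1 + (t:ℤ))) rv := pref_congr true hPQ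
      have hlQ : rv ≤ (pref true (fun t : ℕ => f (m + 1 + (t:ℤ))) rv).length :=
        pref_len_lb _ _ rv
      have A := right_lemma true f F σ hσ1 hσ2 (m + 1)
      have B := left_lemma_U f F σ m hσ1 hσ2
      have hPrv : (if rv = 0 then false else f (m - (rv:ℤ))) = false := by
        rw [if_neg (by omega)]; exact hend1
      refine ⟨(pref true (fun t : ℕ => f (m + 1 + (t:ℤ))) rv).length, by omega, ?_, ?_, ?_⟩
      · intro i hi1 hi2
        have eL : σ m + ((0:ℕ):ℤ) - (i:ℤ) = σ m - (i:ℤ) := by push_cast; ring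
        have eR : σ m + ((0:ℕ):ℤ) + 1 + (i:ℤ) = σ (m + 1) + (i:ℤ) := by
          rw [hσm1]; push_cast; ring
        rw [eL, eR, B i hi1, A i]
        rw [om_eq_pref true _ (hprefeq ▸ hi2), hprefeq, om_eq_pref true _ hi2]
      · have eL : σ m + ((0:ℕ):ℤ) - (((pref true (fun t : ℕ => f (m + 1 + (t:ℤ))) rv).length : ℕ):ℤ)
            = σ m - (((pref true (fun t : ℕ => f (m + 1 + (t:ℤ))) rv).length : ℕ):ℤ) := by
          push_cast; ring
        rw [eL, B _ (by omega)]
        rw [show (pref true (fun t : ℕ => f (m + 1 + (t:ℤ))) rv).length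
            = (pref true (fun t : ℕ => if t = 0 then false else f (m - (t:ℤ))) rv).length + 0 by
            rw [hprefeq, Nat.add_zero]]
        rw [om_block true _ (by rw [hPrv]; exact img_len_pos _ _), hPrv, imgU0]
      · have eR : σ m + ((0:ℕ):ℤ) + 1 + (((pref true (fun t : ℕ => f (m + 1 + (t:ℤ))) rv).length : ℕ):ℤ)
            = σ (m + 1) + (((pref true (fun t : ℕ => f (m + 1 + (t:ℤ))) rv).length : ℕ):ℤ) := by
          rw [hσm1]; push_cast; ring
        rw [eR, A _]
        rw [show (pref true (fun t : ℕ => f (m + 1 + (t:ℤ))) rv).length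
            = (pref true (fun t : ℕ => f (m + 1 + (t:ℤ))) rv).length + 0 from rfl]
        rw [om_block true _ (by rw [hend2]; exact img_len_pos _ _), hend2, imgU0]
    | false =>
      have hk1 : k = 1 := by
        rcases Nat.lt_or_ge k 1 with h | h
        · exfalso
          have : k = 0 := by omega
          subst this
          rw [hσ2 m 0 (img_len_pos _ _), hfm, imgU0] at hj
          exact Bool.false_ne_true hj
        · rw [hfm] at hk; simp [img] at hk; omega
      subst hk1
      have hw : (img true false).length = 2 := rfl
      have hσm1 : σ (m + 1) = σ m + 2 := by rw [hσ1 m, hfm, hw]; norm_num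
      have hfm1 : f (m + 1) = false := by
        have e : σ m + ((1:ℕ):ℤ) + 1 = σ (m + 1) + ((0:ℕ):ℤ) := by rw [hσm1]; push_cast; ring
        rw [e, hσ2 (m+1) 0 (img_len_pos _ _), imgU0] at hj1
        exact hj1
      refine ⟨1, le_refl 1, by omega, ?_, ?_⟩
      · have e : σ m + ((1:ℕ):ℤ) - ((1:ℕ):ℤ) = σ m + ((0:ℕ):ℤ) := by push_cast; ring
        rw [e, hσ2 m 0 (img_len_pos _ _), hfm, imgU0]
      · have e : σ m + ((1:ℕ):ℤ) + 1 + ((1:ℕ):ℤ) = σ (m + 1) + ((1:ℕ):ℤ) := by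
          rw [hσm1]; push_cast; ring
        rw [e, hσ2 (m+1) 1 (by rw [hfm1]; simp [img]), hfm1]
        rfl

inductive Chr : List Bool → Prop
  | base : Chr [false, true]
  | step (u : Bool) (v : List Bool) : Chr v → Chr (app u v)

lemma foldr_app (u : Bool) (L : List Bool) (x y : List Bool) :
    L.foldr outerStep (app u x, app u y) = Prod.map (app u) (app u) (L.foldr outerStep (x, y)) := by
  induction L with
  | nil => rfl
  | cons r L ih =>
    simp only [List.foldr_cons, ih]
    obtain ⟨X, Y⟩ := L.foldr outerStep (x, y)
    cases r <;> simp [outerStep, app_append]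

lemma chr_of_pair (α β : List Bool) (h : ∃ Rs : List Bool, Rs.foldr outerStep ([false], [true]) = (α, β)) :
    Chr (α ++ β) := by
  obtain ⟨Rs, hRs⟩ := h
  induction Rs using List.reverseRecOn generalizing α β with
  | nil =>
    simp only [List.foldr_nil, Prod.mk.injEq] at hRs
    rw [← hRs.1, ← hRs.2]; exact Chr.base
  | append_singleton L u ih =>
    rw [List.foldr_append, List.foldr_cons, List.foldr_nil] at hRs
    have hbase : outerStep u ([false], [true]) = (app u [false], app u [true]) := by
      cases u <;> simp [outerStep, app, img]
    rw [hbase, foldr_app] at hRs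
    obtain ⟨X, Y, hXY⟩ : ∃ X Y, L.foldr outerStep ([false], [true]) = (X, Y) :=
      ⟨_, _, rfl⟩
    rw [hXY] at hRs
    simp only [Prod.map, Prod.mk.injEq] at hRs
    rw [← hRs.1, ← hRs.2, ← app_append]
    exact Chr.step u _ (ih _ _ hXY)

lemma take_succ_app (u : Bool) (v : List Bool) {s : ℕ} (hs : s < v.length) :
    app u (v.take (s + 1)) = app u (v.take s) ++ img u (v.getD s false) := by
  rw [List.take_succ, app_append]
  congr 1
  simp [app, List.getD, List.getElem?_eq_getElem hs]

lemma len_app_take_le (u : Bool) (v : List Bool) (s : ℕ) :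
    (app u (v.take s)).length ≤ (app u v).length := by
  conv_rhs => rw [← List.take_append_drop s v]
  rw [app_append, List.length_append]; omega

lemma int_succ_div_mod {n m : ℤ} (hn : 0 < n) :
    (m % n + 1 < n ∧ (m + 1) / n = m / n ∧ (m + 1) % n = m % n + 1) ∨
    (m % n + 1 = n ∧ (m + 1) / n = m / n + 1 ∧ (m + 1) % n = 0) := by
  have h1 := Int.mul_ediv_add_emod m n
  have h2 := Int.emod_nonneg m (by omega : n ≠ 0)
  have h3 := Int.emod_lt_of_pos m hn
  rcases lt_or_ge (m % n + 1) n with h | h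
  · exact Or.inl ⟨h, (Int.ediv_emod_unique hn).mpr ⟨by omega, by omega, h⟩⟩
  · exact Or.inr ⟨by omega,
      (Int.ediv_emod_unique hn).mpr ⟨by rw [mul_add, mul_one]; omega, by omega, hn⟩⟩

lemma decomp_list (u : Bool) : ∀ (l : List Bool) (d : ℕ), d < (app u l).length →
    ∃ s, s < l.length ∧ ∃ k, k < (img u (l.getD s false)).length ∧
      d = (app u (l.take s)).length + k := by
  intro l
  induction l with
  | nil => intro d hd; simp [app] at hd
  | cons c l ih =>
    intro d hd
    rcases lt_or_ge d (img u c).length with h | h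
    · exact ⟨0, by simp, d, by simpa using h, by simp [app]⟩
    · have hd' : d - (img u c).length < (app u l).length := by
        simp only [app, List.flatMap_cons, List.length_append] at hd ⊢; omega
      obtain ⟨s, hs, k, hk, hdk⟩ := ih _ hd'
      refine ⟨s + 1, by simpa using hs, k, by simpa using hk, ?_⟩
      simp only [List.take_succ_cons, app, List.flatMap_cons, List.length_append]
      simp only [app] at hdk; omega

theorem cyc_sub (u : Bool) (v : List Bool) (hv : v ≠ []) :
    ∃ σ : ℤ → ℤ,
      (∀ m, σ (m + 1) = σ m + (img u (cyc v m)).length) ∧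
      (∀ m (k : ℕ), k < (img u (cyc v m)).length →
        cyc (app u v) (σ m + k) = (img u (cyc v m)).getD k false) ∧
      (∀ j, ∃ m, ∃ k : ℕ, k < (img u (cyc v m)).length ∧ j = σ m + k) := by
  have hn : 0 < ((v.length : ℤ)) := by
    have := List.length_pos_iff.mpr hv; exact_mod_cast this
  have hlenvN : v.length ≤ (app u v).length := by
    have : ∀ l : List Bool, l.length ≤ (app u l).length := by
      intro l; induction l with
      | nil => simp [app]
      | cons c l ih =>
        simp only [app, List.flatMap_cons, List.length_append, List.length_cons] at ih ⊢
        have := img_len_pos u c; omega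
    exact this v
  have hN : 0 < (((app u v).length : ℤ)) := by
    have := List.length_pos_iff.mpr hv
    have : 0 < (app u v).length := by omega
    exact_mod_cast this
  refine ⟨fun m => ((app u v).length : ℤ) * (m / (v.length : ℤ))
      + ((app u (v.take (m % (v.length : ℤ)).toNat)).length : ℤ), ?_, ?_, ?_⟩
  · -- s1
    intro m
    show ((app u v).length : ℤ) * ((m + 1) / (v.length : ℤ))
        + ((app u (v.take ((m + 1) % (v.length : ℤ)).toNat)).length : ℤ)
      = ((app u v).length : ℤ) * (m / (v.length : ℤ))
        + ((app u (v.take (m % (v.length : ℤ)).toNat)).length : ℤ)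
        + (img u (cyc v m)).length
    have h2 := Int.emod_nonneg m (by omega : (v.length : ℤ) ≠ 0)
    have h3 := Int.emod_lt_of_pos m hn
    have hs : (m % (v.length : ℤ)).toNat < v.length := by omega
    have hfm : cyc v m = v.getD (m % (v.length : ℤ)).toNat false := rfl
    rcases int_succ_div_mod (m := m) hn with ⟨h, hq, hr⟩ | ⟨h, hq, hr⟩
    · rw [hq, hr, hfm]
      have ht : (m % (v.length : ℤ) + 1).toNat = (m % (v.length : ℤ)).toNat + 1 := by omega
      rw [ht, take_succ_app u v hs, List.length_append]
      push_cast; ring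
    · rw [hq, hr, hfm]
      have hlast : (m % (v.length : ℤ)).toNat + 1 = v.length := by omega
      have hfull : app u (v.take ((m % (v.length : ℤ)).toNat + 1)) = app u v := by
        rw [hlast, List.take_length]
      have hsplit := take_succ_app u v hs
      rw [hfull] at hsplit
      have hlen : (app u v).length = (app u (v.take (m % (v.length : ℤ)).toNat)).length
          + (img u (v.getD (m % (v.length : ℤ)).toNat false)).length := by
        rw [hsplit, List.length_append]
      simp only [Int.toNat_zero, List.take_zero, app, List.flatMap_nil, List.length_nil]
      rw [mul_add, mul_one]
      simp only [app] at hlen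
      push_cast [hlen]; ring
  · -- s2
    intro m k hk
    have h2 := Int.emod_nonneg m (by omega : (v.length : ℤ) ≠ 0)
    have h3 := Int.emod_lt_of_pos m hn
    have hs : (m % (v.length : ℤ)).toNat < v.length := by omega
    have hfm : cyc v m = v.getD (m % (v.length : ℤ)).toNat false := rfl
    rw [hfm] at hk ⊢
    show cyc (app u v) (((app u v).length : ℤ) * (m / (v.length : ℤ))
        + ((app u (v.take (m % (v.length : ℤ)).toNat)).length : ℤ) + k)
      = (img u (v.getD (m % (v.length : ℤ)).toNat false)).getD k false
    have hdN : (((app u (v.take (m % (v.length : ℤ)).toNat)).length + k : ℕ) : ℤ)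
        < ((app u v).length : ℤ) := by
      have h4 := len_app_take_le u v ((m % (v.length : ℤ)).toNat + 1)
      rw [take_succ_app u v hs, List.length_append] at h4
      push_cast; omega
    have hz : (((app u v).length : ℤ) * (m / (v.length : ℤ))
        + ((app u (v.take (m % (v.length : ℤ)).toNat)).length : ℤ) + k)
        % ((app u v).length : ℤ)
        = (((app u (v.take (m % (v.length : ℤ)).toNat)).length + k : ℕ) : ℤ) := by
      have he : ((app u v).length : ℤ) * (m / (v.length : ℤ))
          + ((app u (v.take (m % (v.length : ℤ)).toNat)).length : ℤ) + k
          = (((app u (v.take (m % (v.length : ℤ)).toNat)).length + k : ℕ) : ℤ)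
            + ((app u v).length : ℤ) * (m / (v.length : ℤ)) := by
        push_cast; ring
      rw [he, Int.add_mul_emod_self_left, Int.emod_eq_of_lt (by positivity) hdN]
    show (app u v).getD _ false = _
    rw [hz, Int.toNat_natCast]
    have hsplitv : app u v = app u (v.take (m % (v.length : ℤ)).toNat)
        ++ (img u (v.getD (m % (v.length : ℤ)).toNat false)
            ++ app u (v.drop ((m % (v.length : ℤ)).toNat + 1))) := by
      conv_lhs => rw [← List.take_append_drop ((m % (v.length : ℤ)).toNat + 1) v]
      rw [app_append, take_succ_app u v hs, List.append_assoc]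
    rw [hsplitv, List.getD_append_right _ _ _ _ (by omega), Nat.add_sub_cancel_left,
      List.getD_append _ _ _ _ hk]
  · -- s3
    intro j
    have h2 := Int.emod_nonneg j (by omega : ((app u v).length : ℤ) ≠ 0)
    have h3 := Int.emod_lt_of_pos j hN
    have hd : (j % ((app u v).length : ℤ)).toNat < (app u v).length := by omega
    obtain ⟨s, hs, k, hk, hdk⟩ := decomp_list u v _ hd
    have hsn : (s : ℤ) < (v.length : ℤ) := by exact_mod_cast hs
    have hs0 : (0 : ℤ) ≤ (s : ℤ) := by positivity
    have hmod : ((v.length : ℤ) * (j / ((app u v).length : ℤ)) + (s : ℤ)) % (v.length : ℤ)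
        = (s : ℤ) := by
      rw [add_comm, Int.add_mul_emod_self_left, Int.emod_eq_of_lt hs0 hsn]
    have hdiv : ((v.length : ℤ) * (j / ((app u v).length : ℤ)) + (s : ℤ)) / (v.length : ℤ)
        = j / ((app u v).length : ℤ) := by
      exact ((Int.ediv_emod_unique hn).mpr ⟨by ring, hs0, hsn⟩).1
    refine ⟨(v.length : ℤ) * (j / ((app u v).length : ℤ)) + (s : ℤ), k, ?_, ?_⟩
    · show k < (img u (cyc v _)).length
      have : cyc v ((v.length : ℤ) * (j / ((app u v).length : ℤ)) + (s : ℤ))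
          = v.getD s false := by
        unfold cyc; rw [hmod, Int.toNat_natCast]
      rw [this]; exact hk
    · show j = ((app u v).length : ℤ) * (((v.length : ℤ) * (j / ((app u v).length : ℤ)) + (s : ℤ)) / (v.length : ℤ))
        + ((app u (v.take ((((v.length : ℤ) * (j / ((app u v).length : ℤ)) + (s : ℤ)) % (v.length : ℤ)).toNat))).length : ℤ) + k
      rw [hmod, hdiv, Int.toNat_natCast]
      have hj := Int.mul_ediv_add_emod j ((app u v).length : ℤ)
      have hcast : ((j % ((app u v).length : ℤ)).toNat : ℤ) = j % ((app u v).length : ℤ) := by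
        omega
      rw [hdk] at hcast
      push_cast at hcast
      omega

lemma length_le_app (u : Bool) (v : List Bool) : v.length ≤ (app u v).length := by
  induction v with
  | nil => simp [app]
  | cons c l ih =>
    simp only [app, List.flatMap_cons, List.length_append, List.length_cons] at ih ⊢
    have := img_len_pos u c; omega

lemma chr_ne_nil {v : List Bool} (h : Chr v) : v ≠ [] := by
  induction h with
  | base => simp
  | step u v _ ih =>
    intro hc
    apply ih
    have h1 := length_le_app u v
    rw [hc] at h1
    simpa using List.length_eq_zero_iff.mp (by simpa using h1)

lemma good_base : Good (cyc [false, true]) := by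
  have hmod : ∀ z : ℤ, cyc [false, true] z = decide (z % 2 = 1) := by
    intro z
    have h : z % 2 = 0 ∨ z % 2 = 1 := by omega
    show [false, true].getD (z % ((2:ℕ):ℤ)).toNat false = _
    rcases h with h | h
    · rw [show (z % ((2:ℕ):ℤ)) = 0 by exact_mod_cast h]
      simp [h]
    · rw [show (z % ((2:ℕ):ℤ)) = 1 by exact_mod_cast h]
      simp [h]
  intro j hj hj1
  rw [hmod] at hj
  have hj2 : j % 2 = 1 := by simpa using hj
  refine ⟨1, le_refl 1, by omega, ?_, ?_⟩
  · rw [hmod]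
    simp only [decide_eq_false_iff_not]
    push_cast
    omega
  · rw [hmod]
    simp only [decide_eq_true_eq]
    push_cast
    omega

lemma chr_good {v : List Bool} (h : Chr v) : Good (cyc v) := by
  induction h with
  | base => exact good_base
  | step u v hv ih =>
    obtain ⟨σ, hσ1, hσ2, hσ3⟩ := cyc_sub u v (chr_ne_nil hv)
    exact good_step u (cyc v) (cyc (app u v)) σ hσ1 hσ2 hσ3 ih

/-- In a Christoffel word `w = αβ`, read cyclically, every occurrence of `ba` extends
to a factor of the form `a θᵀ b a θ b`: if `w_j w_{j+1} = ba` then there is `r ≥ 1`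
with `w_{j−i} = w_{j+1+i}` for `1 ≤ i ≤ r−1`, `w_{j−r} = a` and `w_{j+r+1} = b`. -/
theorem christoffel_ba_factor (α β : List Bool) (h : ChristoffelPair (α, β)) :
    ∀ j : ℤ, cyc (α ++ β) j = true → cyc (α ++ β) (j + 1) = false →
      ∃ r : ℕ, 1 ≤ r ∧
        (∀ i : ℕ, 1 ≤ i → i < r → cyc (α ++ β) (j - i) = cyc (α ++ β) (j + 1 + i)) ∧
        cyc (α ++ β) (j - r) = false ∧ cyc (α ++ β) (j + 1 + r) = true := by
  exact chr_good (chr_of_pair α β h)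
end

section
/- Let μ, ν be coprime positive integers, and define rᵢ = ⌊iμ/ν⌋ − ⌊(i−1)μ/ν⌋ for 1 ≤ i ≤ ν. Then the word w = a b^{r₁} a b^{r₂} ⋯ a b^{r_ν} over {a, b} satisfies |w|_a = ν and |w|_b = μ, and w is a lower Christoffel word (i.e., w = ab, or w = αβ for some pair (α, β) in the tree generated from (a, b) by Ū and V̄, or w equals a or b in degenerate cases). -/
/-- The mechanical word `a b^{r₁} ⋯ a b^{r_ν}`. -/
def MW (μ ν : ℕ) : List Bool :=
  ((List.range ν).map
      (fun i => false :: List.replicate ((i + 1) * μ / ν - i * μ / ν) true)).flatten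

/-- The morphism `U : a ↦ ab, b ↦ b`. -/
def applyU (w : List Bool) : List Bool := w.flatMap (fun x => if x then [true] else [false, true])

/-- The morphism `V : a ↦ a, b ↦ ab`. -/
def applyV (w : List Bool) : List Bool := w.flatMap (fun x => if x then [false, true] else [false])

lemma applyU_append (u v : List Bool) : applyU (u ++ v) = applyU u ++ applyU v :=
  List.flatMap_append ..

lemma applyV_append (u v : List Bool) : applyV (u ++ v) = applyV u ++ applyV v :=
  List.flatMap_append ..

lemma applyU_flatten (L : List (List Bool)) : applyU L.flatten = (L.map applyU).flatten := by
  induction L with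
  | nil => rfl
  | cons h t ih => simp [List.flatten_cons, applyU_append, ih]

lemma applyV_flatten (L : List (List Bool)) : applyV L.flatten = (L.map applyV).flatten := by
  induction L with
  | nil => rfl
  | cons h t ih => simp [List.flatten_cons, applyV_append, ih]

lemma applyU_replicate (n : ℕ) : applyU (List.replicate n true) = List.replicate n true := by
  induction n with
  | zero => rfl
  | succ n ih => simp only [List.replicate_succ]; simpa [applyU] using ih

lemma applyV_replicate (n : ℕ) :
    applyV (List.replicate n true) = (List.replicate n [false, true]).flatten := by
  induction n with
  | zero => rfl
  | succ n ih => simp only [List.replicate_succ, List.flatten_cons]; simpa [applyV] using ih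

/-- Applying `U` letterwise to a Christoffel pair corresponds to appending a `Ū` step innermost. -/
lemma foldr_applyU (Rs : List Bool) :
    (Rs ++ [true]).foldr outerStep ([false], [true]) =
      (applyU (Rs.foldr outerStep ([false], [true])).1,
       applyU (Rs.foldr outerStep ([false], [true])).2) := by
  induction Rs with
  | nil => rfl
  | cons r Rs ih =>
      show outerStep r ((Rs ++ [true]).foldr outerStep ([false], [true])) = _
      rw [ih]
      cases r <;> simp [outerStep, applyU_append]

lemma foldr_applyV (Rs : List Bool) :
    (Rs ++ [false]).foldr outerStep ([false], [true]) =
      (applyV (Rs.foldr outerStep ([false], [true])).1,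
       applyV (Rs.foldr outerStep ([false], [true])).2) := by
  induction Rs with
  | nil => rfl
  | cons r Rs ih =>
      show outerStep r ((Rs ++ [false]).foldr outerStep ([false], [true])) = _
      rw [ih]
      cases r <;> simp [outerStep, applyV_append]

/-- Recursion for the mechanical word: increasing the slope by 1 applies `U`. -/
lemma MW_U (μ ν : ℕ) (hν : 0 < ν) : MW (μ + ν) ν = applyU (MW μ ν) := by
  unfold MW
  rw [applyU_flatten, List.map_map]
  refine congrArg _ (List.map_congr_left fun i _ => ?_)
  have h1 : (i + 1) * (μ + ν) / ν = (i + 1) * μ / ν + (i + 1) := by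
    rw [Nat.mul_add, Nat.add_mul_div_right _ _ hν]
  have h2 : i * (μ + ν) / ν = i * μ / ν + i := by
    rw [Nat.mul_add, Nat.add_mul_div_right _ _ hν]
  have h3 : i * μ / ν ≤ (i + 1) * μ / ν :=
    Nat.div_le_div_right (Nat.mul_le_mul_right _ (by omega))
  have h4 : (i + 1) * (μ + ν) / ν - i * (μ + ν) / ν = ((i + 1) * μ / ν - i * μ / ν) + 1 := by
    omega
  rw [h4]
  show false :: List.replicate (((i + 1) * μ / ν - i * μ / ν) + 1) true
      = applyU (false :: List.replicate ((i + 1) * μ / ν - i * μ / ν) true)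
  have : applyU (false :: List.replicate ((i + 1) * μ / ν - i * μ / ν) true)
      = [false, true] ++ applyU (List.replicate ((i + 1) * μ / ν - i * μ / ν) true) := rfl
  rw [this, applyU_replicate]
  simp [List.replicate_succ]

/-- Decomposing a flatten over `range (f n)` into superblocks. -/
lemma flatten_decomp (g : ℕ → List Bool) (f : ℕ → ℕ) (hf : ∀ i, f i ≤ f (i + 1))
    (h0 : f 0 = 0) (n : ℕ) :
    ((List.range (f n)).map g).flatten =
      ((List.range n).map
        (fun i => ((List.range' (f i) (f (i + 1) - f i)).map g).flatten)).flatten := by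
  induction n with
  | zero => simp [h0]
  | succ n ih =>
      rw [List.range_succ, List.map_append, List.flatten_append, ← ih]
      have hr : List.range (f (n + 1)) = List.range (f n) ++ List.range' (f n) (f (n + 1) - f n) := by
        rw [List.range_eq_range', List.range_eq_range']
        have := List.range'_append (s := 0) (m := f n) (n := f (n + 1) - f n) (step := 1)
        simp only [one_mul, Nat.zero_add] at this
        rw [this]
        congr 1
        have := hf n
        omega
      rw [hr, List.map_append, List.flatten_append]
      simp

lemma div_eq_of_decomp {ν d r x : ℕ} (hν : 0 < ν) (h : x = ν * d + r) (hr : r < ν) :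
    x / ν = d := by
  subst h
  rw [Nat.mul_add_div hν, Nat.div_eq_of_lt hr]
  omega

/-- Recursion for the mechanical word: `V` step. -/
lemma MW_V (μ κ : ℕ) (hμ : 0 < μ) (hκ : 0 < κ) : MW μ (μ + κ) = applyV (MW μ κ) := by
  set ν := μ + κ with hνdef
  have hν : 0 < ν := by omega
  have htmono : ∀ i, (fun i => i + i * μ / κ) i ≤ (fun i => i + i * μ / κ) (i + 1) := by
    intro i
    have : i * μ / κ ≤ (i + 1) * μ / κ :=
      Nat.div_le_div_right (Nat.mul_le_mul_right _ (by omega))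
    simp only
    omega
  have ht0 : (fun i => i + i * μ / κ) 0 = 0 := by simp
  have htκ : κ + κ * μ / κ = ν := by
    rw [Nat.mul_div_cancel_left _ hκ]
    omega
  unfold MW
  have hdec := flatten_decomp
    (fun i => false :: List.replicate ((i + 1) * μ / ν - i * μ / ν) true)
    (fun i => i + i * μ / κ) htmono ht0 κ
  rw [htκ] at hdec
  rw [applyV_flatten, List.map_map, hdec]
  refine congrArg _ (List.map_congr_left fun i hi => ?_)
  rw [List.mem_range] at hi
  beta_reduce
  simp only [Function.comp_apply]
  -- arithmetic setup
  obtain ⟨q, hq⟩ : ∃ q, i * μ / κ = q := ⟨_, rfl⟩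
  obtain ⟨ρ, hρ⟩ : ∃ ρ, i * μ % κ = ρ := ⟨_, rfl⟩
  have hdm : i * μ = κ * q + ρ := by rw [← hq, ← hρ]; exact (Nat.div_add_mod _ _).symm
  have hρκ : ρ < κ := by rw [← hρ]; exact Nat.mod_lt _ hκ
  obtain ⟨s, hs⟩ : ∃ s, (ρ + μ) / κ = s := ⟨_, rfl⟩
  have hs1 : (i + 1) * μ / κ = q + s := by
    have e1 : (i + 1) * μ = i * μ + μ := by ring
    have e2 : (i + 1) * μ = κ * q + (ρ + μ) := by omega
    rw [e2, Nat.mul_add_div hκ, hs]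
  have hsd : κ * s ≤ ρ + μ ∧ ρ + μ < κ * s + κ := by
    have h := Nat.div_add_mod (ρ + μ) κ
    have h2 := Nat.mod_lt (ρ + μ) hκ
    rw [hs] at h
    omega
  have hd : (i + 1 + (i + 1) * μ / κ) - (i + i * μ / κ) = 1 + s := by
    rw [hq, hs1]; omega
  rw [hd]
  -- the first block of the superblock is `a`
  have hti : (i + i * μ / κ) * μ = ν * q + ρ := by
    rw [hq]
    have e1 : (i + q) * μ = i * μ + q * μ := by ring
    have e2 : ν * q = μ * q + κ * q := by rw [hνdef]; ring
    have e3 : q * μ = μ * q := by ring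
    omega
  have hF1a : (i + i * μ / κ) * μ / ν = q := div_eq_of_decomp hν hti (by omega)
  have hF1b : ((i + i * μ / κ) + 1) * μ / ν = q := by
    have e1 : ((i + i * μ / κ) + 1) * μ = (i + i * μ / κ) * μ + μ := by ring
    have e2 : ((i + i * μ / κ) + 1) * μ = ν * q + (ρ + μ) := by omega
    exact div_eq_of_decomp hν e2 (by omega)
  -- the remaining blocks are `ab`
  have hF2 : ∀ j ∈ List.range' ((i + i * μ / κ) + 1) s,
      (j + 1) * μ / ν - j * μ / ν = 1 := by
    intro j hj
    rw [List.mem_range'_1] at hj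
    obtain ⟨hj1, hj2⟩ := hj
    obtain ⟨l, hl⟩ : ∃ l, j - ((i + i * μ / κ) + 1) = l := ⟨_, rfl⟩
    have hjl : j = (i + i * μ / κ) + 1 + l := by omega
    have hls : l < s := by omega
    have hlκ : l * κ + κ ≤ ρ + μ := by
      have e1 : (l + 1) * κ = l * κ + κ := by ring
      have e2 : (l + 1) * κ ≤ s * κ := Nat.mul_le_mul_right _ (by omega)
      have e3 : s * κ = κ * s := by ring
      omega
    obtain ⟨R, hR⟩ : ∃ R, ρ + μ - l * κ = R := ⟨_, rfl⟩
    have hRκ : κ ≤ R := by omega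
    have hRν : R < ν := by omega
    have hjμ : j * μ = ν * (q + l) + R := by
      have e1 : j * μ = (i + i * μ / κ) * μ + μ + l * μ := by rw [hjl]; ring
      have e2 : ν * (q + l) = ν * q + l * μ + l * κ := by rw [hνdef]; ring
      omega
    have hja : j * μ / ν = q + l := div_eq_of_decomp hν hjμ hRν
    have hjb : (j + 1) * μ / ν = q + l + 1 := by
      have e1 : (j + 1) * μ = j * μ + μ := by ring
      have e2 : ν * (q + l + 1) = ν * (q + l) + ν := by ring
      have e3 : (j + 1) * μ = ν * (q + l + 1) + (R + μ - ν) := by omega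
      exact div_eq_of_decomp hν e3 (by omega)
    omega
  -- put the superblock together
  rw [Nat.add_comm 1 s, List.range'_succ, List.map_cons, List.flatten_cons]
  have hblk0 : (false :: List.replicate
      (((i + i * μ / κ) + 1) * μ / ν - (i + i * μ / κ) * μ / ν) true) = [false] := by
    rw [hF1a, hF1b, Nat.sub_self]
    rfl
  have hblks : (List.range' ((i + i * μ / κ) + 1) s).map
      (fun j => false :: List.replicate ((j + 1) * μ / ν - j * μ / ν) true)
      = List.replicate s [false, true] := by
    have hcg : ∀ j ∈ List.range' ((i + i * μ / κ) + 1) s,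
        (fun j => false :: List.replicate ((j + 1) * μ / ν - j * μ / ν) true) j
          = (fun _ => [false, true]) j := by
      intro j hj
      simp only
      rw [hF2 j hj]
      rfl
    rw [List.map_congr_left hcg, List.map_const', List.length_range']
  rw [hblk0, hblks]
  have hra : applyV (false :: List.replicate ((i + 1) * μ / κ - i * μ / κ) true)
      = [false] ++ applyV (List.replicate ((i + 1) * μ / κ - i * μ / κ) true) := rfl
  rw [hra, applyV_replicate]
  have hsr : (i + 1) * μ / κ - i * μ / κ = s := by rw [hq, hs1]; omega
  rw [hsr]

/-- Main structural lemma. -/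
lemma MW_christoffel : ∀ n μ ν : ℕ, μ + ν ≤ n → 0 < μ → 0 < ν → Nat.Coprime μ ν →
    ∃ p : List Bool × List Bool, ChristoffelPair p ∧ MW μ ν = p.1 ++ p.2 := by
  intro n
  induction n with
  | zero => intro μ ν h hμ hν _; omega
  | succ n ih =>
      intro μ ν h hμ hν hcop
      rcases lt_trichotomy μ ν with hlt | heq | hgt
      · -- ν > μ : V step
        have hκ : 0 < ν - μ := by omega
        have hcop' : Nat.Coprime μ (ν - μ) := by
          have := Nat.gcd_add_self_right μ (ν - μ)
          unfold Nat.Coprime at *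
          rw [← this]
          have : ν - μ + μ = ν := by omega
          rw [this]; exact hcop
        obtain ⟨p, ⟨Rs, hRs⟩, hw⟩ := ih μ (ν - μ) (by omega) hμ hκ hcop'
        refine ⟨((Rs ++ [false]).foldr outerStep ([false], [true])),
          ⟨Rs ++ [false], rfl⟩, ?_⟩
        have hν' : ν = μ + (ν - μ) := by omega
        rw [hν', MW_V μ (ν - μ) hμ hκ, hw, applyV_append, foldr_applyV, hRs]
      · -- μ = ν : both are 1
        subst heq
        have h1 : μ = 1 := by
          have hg := Nat.gcd_self μ
          unfold Nat.Coprime at hcop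
          omega
        subst h1
        exact ⟨([false], [true]), ⟨[], rfl⟩, by decide⟩
      · -- μ > ν : U step
        have hμ' : 0 < μ - ν := by omega
        have hcop' : Nat.Coprime (μ - ν) ν := by
          have := Nat.gcd_add_self_left ν (μ - ν)
          unfold Nat.Coprime at *
          rw [← this]
          have : μ - ν + ν = μ := by omega
          rw [this]; exact hcop
        obtain ⟨p, ⟨Rs, hRs⟩, hw⟩ := ih (μ - ν) ν (by omega) hμ' hν hcop'
        refine ⟨((Rs ++ [true]).foldr outerStep ([false], [true])),
          ⟨Rs ++ [true], rfl⟩, ?_⟩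
        have hμeq : μ = (μ - ν) + ν := by omega
        rw [hμeq, MW_U (μ - ν) ν hν, hw, applyU_append, foldr_applyU, hRs]

lemma MW_count_false (μ ν : ℕ) : (MW μ ν).count false = ν := by
  unfold MW
  rw [List.count_flatten, List.map_map]
  have : ((List.range ν).map
      ((List.count false) ∘ fun i => false :: List.replicate ((i + 1) * μ / ν - i * μ / ν) true))
      = (List.range ν).map (fun _ => 1) := by
    refine List.map_congr_left fun i _ => ?_
    simp [List.count_cons, List.count_replicate]
  rw [this]
  simp [List.map_const']

lemma telescope (f : ℕ → ℕ) (hf : ∀ i, f i ≤ f (i + 1)) (h0 : f 0 = 0) (n : ℕ) :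
    (((List.range n).map (fun i => f (i + 1) - f i)).sum) = f n := by
  induction n with
  | zero => simp [h0]
  | succ n ih =>
      rw [List.range_succ, List.map_append, List.sum_append]
      have := hf n
      simp [ih]
      omega

lemma MW_count_true (μ ν : ℕ) (hν : 0 < ν) : (MW μ ν).count true = μ := by
  unfold MW
  rw [List.count_flatten, List.map_map]
  have : ((List.range ν).map
      ((List.count true) ∘ fun i => false :: List.replicate ((i + 1) * μ / ν - i * μ / ν) true))
      = (List.range ν).map (fun i => (i + 1) * μ / ν - i * μ / ν) := by
    refine List.map_congr_left fun i _ => ?_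
    simp [List.count_cons, List.count_replicate]
  rw [this, telescope (fun i => i * μ / ν)
    (fun i => Nat.div_le_div_right (Nat.mul_le_mul_right _ (by omega))) (by simp) ν]
  exact Nat.mul_div_cancel_left μ hν

/-- For coprime `μ, ν ≥ 1`, with `rᵢ = ⌊iμ/ν⌋ − ⌊(i−1)μ/ν⌋`, the word
`w = a b^{r₁} a b^{r₂} ⋯ a b^{r_ν}` has `ν` letters `a`, `μ` letters `b`, and is a
lower Christoffel word. -/
theorem christoffel_word_from_mechanical (μ ν : ℕ) (hμ : 0 < μ) (hν : 0 < ν)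
    (hcop : Nat.Coprime μ ν) :
    ((List.range ν).map
        (fun i => false :: List.replicate ((i + 1) * μ / ν - i * μ / ν) true)).flatten.count
        false = ν ∧
    ((List.range ν).map
        (fun i => false :: List.replicate ((i + 1) * μ / ν - i * μ / ν) true)).flatten.count
        true = μ ∧
    (((List.range ν).map
        (fun i => false :: List.replicate ((i + 1) * μ / ν - i * μ / ν) true)).flatten
        = [false, true] ∨
     (∃ p : List Bool × List Bool, ChristoffelPair p ∧
        ((List.range ν).map
          (fun i => false :: List.replicate ((i + 1) * μ / ν - i * μ / ν) true)).flatten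
          = p.1 ++ p.2) ∨
     ((List.range ν).map
        (fun i => false :: List.replicate ((i + 1) * μ / ν - i * μ / ν) true)).flatten
        = [false] ∨
     ((List.range ν).map
        (fun i => false :: List.replicate ((i + 1) * μ / ν - i * μ / ν) true)).flatten
        = [true]) := by
  obtain ⟨p, hp, hw⟩ := MW_christoffel (μ + ν) μ ν le_rfl hμ hν hcop
  exact ⟨MW_count_false μ ν, MW_count_true μ ν hν, Or.inr (Or.inl ⟨p, hp, hw⟩)⟩
end
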